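/- arXiv:2310.04149 — 12 statements merged into one kernel-verified Lean document; each statement's English description precedes it below -/
import Mathlib

section
/- For n = 3 and for all n ≥ 5, every strong endomorphism of the cycle graph C_n is an automorphism, i.e. sEnd(C_n) = Aut(C_n). -/
/-- Adjacency in the cycle graph `C_n` on vertex set `ZMod n`. -/
def cycleAdj (n : ℕ) (u v : ZMod n) : Prop := v - u = 1 ∨ u - v = 1

/-- `α` is a strong endomorphism of `C_n`: `{u,v}` is an edge iff `{α u, α v}` is. -/
def IsStrongEndCycle (n : ℕ) (α : ZMod n → ZMod n) : Prop :=
  ∀ u v : ZMod n, cycleAdj n u v ↔ cycleAdj n (α u) (α v)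

lemma key5 (n : ℕ) (hn : 5 ≤ n) (α : ZMod n → ZMod n) (hα : IsStrongEndCycle n α) :
    Function.Bijective α := by
  haveI : NeZero n := ⟨by omega⟩
  have h2 : (2 : ZMod n) ≠ 0 := by
    have := (ZMod.natCast_eq_zero_iff 2 n).not.mpr
      (fun h => absurd (Nat.le_of_dvd (by norm_num) h) (by omega))
    simpa using this
  have h4 : (4 : ZMod n) ≠ 0 := by
    have := (ZMod.natCast_eq_zero_iff 4 n).not.mpr
      (fun h => absurd (Nat.le_of_dvd (by norm_num) h) (by omega))
    simpa using this
  -- each step is ±1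
  have hstep : ∀ u : ZMod n, α (u + 1) = α u + 1 ∨ α (u + 1) = α u - 1 := by
    intro u
    have h := (hα u (u + 1)).mp (by left; ring)
    rcases h with h | h
    · left; linear_combination h
    · right; linear_combination -h
  -- α (u+2) ≠ α u
  have hne : ∀ u : ZMod n, α (u + 2) ≠ α u := by
    intro u heq
    have hadj : cycleAdj n (α (u + 2)) (α (u + 2 + 1)) :=
      (hα (u + 2) (u + 2 + 1)).mp (by left; ring)
    have hnadj : ¬ cycleAdj n (α u) (α (u + 3)) := by
      intro h
      have := (hα u (u + 3)).mpr h
      rcases this with h' | h'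
      · exact h2 (by linear_combination h')
      · exact h4 (by linear_combination -h')
    rw [heq] at hadj
    exact hnadj (by rwa [show u + 2 + 1 = u + 3 by ring] at hadj)
  -- consecutive steps are equal
  set d : ZMod n := α 1 - α 0 with hd
  have hsucc : ∀ u : ZMod n, α (u + 1) = α u + d → α (u + 1 + 1) = α (u + 1) + d := by
    intro u h1
    rcases hstep u with h | h <;> rcases hstep (u + 1) with h' | h'
    · have : d = 1 := by rw [h1] at h; linear_combination h
      rw [this] at *; exact h'
    · exfalso; apply hne u; rw [show u + 2 = u + 1 + 1 by ring, h', h]; ring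
    · exfalso; apply hne u; rw [show u + 2 = u + 1 + 1 by ring, h', h]; ring
    · have : d = -1 := by rw [h1] at h; linear_combination h
      rw [this] at *; rw [h']; ring
  have hbase : α (0 + 1) = α 0 + d := by rw [hd]; ring_nf
  have hsteps : ∀ k : ℕ, α ((k : ZMod n) + 1) = α (k : ZMod n) + d := by
    intro k
    induction k with
    | zero => simpa using hbase
    | succ m ih =>
        have := hsucc (m : ZMod n) ih
        simpa [Nat.cast_succ, add_assoc] using this
  have hval : ∀ k : ℕ, α (k : ZMod n) = α 0 + d * k := by
    intro k
    induction k with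
    | zero => simp
    | succ m ih =>
        have := hsteps m
        rw [show ((m + 1 : ℕ) : ZMod n) = (m : ZMod n) + 1 by push_cast; ring, this, ih]
        ring
  have hform : ∀ u : ZMod n, α u = α 0 + d * u := by
    intro u
    have : ((u.val : ℕ) : ZMod n) = u := (ZMod.natCast_val u).trans (ZMod.cast_id _ _)
    rw [← this, hval]
  have hdunit : d = 1 ∨ d = -1 := by
    rcases hstep 0 with h | h
    · left; rw [hd]; linear_combination (by simpa using h : α 1 = α 0 + 1)
    · right; rw [hd]; linear_combination (by simpa using h : α 1 = α 0 - 1)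
  have hinj : Function.Injective α := by
    intro a b hab
    rw [hform a, hform b] at hab
    have : d * a = d * b := by linear_combination hab
    rcases hdunit with h | h <;> rw [h] at this
    · simpa using this
    · have : -a = -b := by linear_combination this
      linear_combination -this
  exact Finite.injective_iff_bijective.mp hinj

/-- For `n = 3` and for all `n ≥ 5`, every strong endomorphism of `C_n` is an
automorphism (a bijective strong endomorphism): `sEnd(C_n) = Aut(C_n)`. -/
theorem sEnd_eq_aut (n : ℕ) (hn : n = 3 ∨ 5 ≤ n) :
    {α : ZMod n → ZMod n | IsStrongEndCycle n α} =
      {α : ZMod n → ZMod n | Function.Bijective α ∧ IsStrongEndCycle n α} := by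
  ext α
  simp only [Set.mem_setOf_eq, iff_def, and_imp]
  refine ⟨fun h => ⟨?_, h⟩, fun _ h => h⟩
  rcases hn with rfl | hn
  · revert h; revert α
    simp only [IsStrongEndCycle, cycleAdj]
    decide
  · exact key5 n hn α h
end

section
/- Let α be a weak endomorphism of the cycle graph C_n and let 1 ≤ i ≤ j ≤ n. Then the image of the interval [i,j] under α is an arc of {1,...,n}, i.e. either an interval [a,b] with 1 ≤ a ≤ b ≤ n, or a set of the form [b,n] ∪ [1,a] with 1 ≤ a ≤ b ≤ n. -/
/-- `α` is a weak endomorphism of the cycle graph `C_n` on `ZMod n`: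
consecutive vertices have images differing by `0`, `1` or `-1` (i.e. `n-1`) mod `n`. -/
def IsWeakEndCycle (n : ℕ) (α : ZMod n → ZMod n) : Prop :=
  ∀ i : ZMod n, α (i + 1) - α i ∈ ({0, 1, -1} : Set (ZMod n))

/-- The subset of `ZMod n` corresponding to the interval `[i,j] = {i, i+1, …, j}`
of `{1,…,n}`. -/
def natInterval (n i j : ℕ) : Set (ZMod n) := (fun x : ℕ => (x : ZMod n)) '' Set.Icc i j

/-- The arc `{c, c+1, …, c+l}` in `ZMod n`. -/
def arcSet (n : ℕ) (c : ZMod n) (l : ℕ) : Set (ZMod n) :=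
  (fun k : ℕ => c + (k : ZMod n)) '' Set.Iic l

lemma mem_arcSet {n : ℕ} {c x : ZMod n} {l : ℕ} :
    x ∈ arcSet n c l ↔ ∃ k ≤ l, x = c + (k : ZMod n) := by
  constructor
  · rintro ⟨k, hk, rfl⟩; exact ⟨k, hk, rfl⟩
  · rintro ⟨k, hk, rfl⟩; exact ⟨k, hk, rfl⟩

lemma arcSet_full {n : ℕ} (hn : 1 ≤ n) (c : ZMod n) (x : ZMod n) :
    x ∈ arcSet n c (n - 1) := by
  have : NeZero n := ⟨by omega⟩
  refine mem_arcSet.2 ⟨(x - c).val, ?_, ?_⟩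
  · have := ZMod.val_lt (x - c); omega
  · rw [ZMod.natCast_val, ZMod.cast_id]; ring

lemma arcSet_extend {n : ℕ} (hn : 1 ≤ n) {c y : ZMod n} {l : ℕ} (hl : l ≤ n - 1)
    (hy : y ∈ arcSet n c l) {d : ZMod n} (hd : d ∈ ({0, 1, -1} : Set (ZMod n))) :
    ∃ c' l', l' ≤ n - 1 ∧ arcSet n c l ∪ {y + d} = arcSet n c' l' := by
  rcases Nat.lt_or_ge l (n - 1) with hl' | hl'
  · obtain ⟨m, hm, rfl⟩ := mem_arcSet.1 hy
    rcases hd with rfl | rfl | rfl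
    · refine ⟨c, l, hl, ?_⟩
      rw [Set.union_eq_self_of_subset_right]
      simp only [Set.singleton_subset_iff, add_zero]
      exact mem_arcSet.2 ⟨m, hm, rfl⟩
    · rcases Nat.lt_or_ge m l with h | h
      · refine ⟨c, l, hl, ?_⟩
        rw [Set.union_eq_self_of_subset_right]
        simp only [Set.singleton_subset_iff]
        exact mem_arcSet.2 ⟨m + 1, by omega, by push_cast; ring⟩
      · have hml : m = l := le_antisymm hm h
        subst hml
        refine ⟨c, m + 1, by omega, ?_⟩
        ext x
        simp only [Set.mem_union, Set.mem_singleton_iff, mem_arcSet]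
        constructor
        · rintro (⟨k, hk, rfl⟩ | rfl)
          · exact ⟨k, by omega, rfl⟩
          · exact ⟨m + 1, le_refl _, by push_cast; ring⟩
        · rintro ⟨k, hk, rfl⟩
          rcases Nat.lt_or_ge k (m + 1) with h | h
          · exact Or.inl ⟨k, by omega, rfl⟩
          · have : k = m + 1 := by omega
            subst this
            right; push_cast; ring
    · rcases Nat.eq_zero_or_pos m with rfl | h
      · refine ⟨c - 1, l + 1, by omega, ?_⟩
        ext x
        simp only [Set.mem_union, Set.mem_singleton_iff, mem_arcSet]
        constructor
        · rintro (⟨k, hk, rfl⟩ | rfl)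
          · exact ⟨k + 1, by omega, by push_cast; ring⟩
          · exact ⟨0, by omega, by push_cast; ring⟩
        · rintro ⟨k, hk, rfl⟩
          rcases Nat.eq_zero_or_pos k with rfl | hk0
          · right; push_cast; ring
          · left
            refine ⟨k - 1, by omega, ?_⟩
            rw [Nat.cast_sub hk0]; push_cast; ring
      · refine ⟨c, l, hl, ?_⟩
        rw [Set.union_eq_self_of_subset_right]
        simp only [Set.singleton_subset_iff]
        refine mem_arcSet.2 ⟨m - 1, by omega, ?_⟩
        rw [Nat.cast_sub h]; push_cast; ring
  · have : l = n - 1 := le_antisymm hl hl'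
    subst this
    refine ⟨c, n - 1, le_refl _, ?_⟩
    rw [Set.union_eq_self_of_subset_right]
    simp only [Set.singleton_subset_iff]
    exact arcSet_full hn c _

lemma image_natInterval_arc {n : ℕ} (hn : 3 ≤ n) {α : ZMod n → ZMod n}
    (hα : IsWeakEndCycle n α) (i j : ℕ) (hij : i ≤ j) :
    ∃ c l, l ≤ n - 1 ∧ α '' natInterval n i j = arcSet n c l := by
  induction j, hij using Nat.le_induction with
  | base =>
      refine ⟨α ((i : ℕ) : ZMod n), 0, by omega, ?_⟩
      have h1 : natInterval n i i = {((i : ℕ) : ZMod n)} := by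
        unfold natInterval
        rw [Set.Icc_self, Set.image_singleton]
      rw [h1, Set.image_singleton]
      ext x
      simp [mem_arcSet, eq_comm]
  | succ j hij ih =>
      obtain ⟨c, l, hl, himg⟩ := ih
      have hsplit : natInterval n i (j + 1) = natInterval n i j ∪ {((j + 1 : ℕ) : ZMod n)} := by
        unfold natInterval
        rw [show Set.Icc i (j + 1) = Set.Icc i j ∪ {j + 1} by ext m; simp; omega]
        rw [Set.image_union, Set.image_singleton]
      have hy : α ((j : ℕ) : ZMod n) ∈ arcSet n c l := by
        rw [← himg]
        exact Set.mem_image_of_mem α ⟨j, by simp [Set.mem_Icc, hij], rfl⟩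
      have hcast : ((j + 1 : ℕ) : ZMod n) = ((j : ℕ) : ZMod n) + 1 := by push_cast; ring
      have hd := hα ((j : ℕ) : ZMod n)
      have hx : α (((j + 1 : ℕ) : ZMod n)) =
          α ((j : ℕ) : ZMod n) + (α (((j : ℕ) : ZMod n) + 1) - α ((j : ℕ) : ZMod n)) := by
        rw [hcast]; ring
      obtain ⟨c', l', hl', heq⟩ := arcSet_extend (by omega : 1 ≤ n) hl hy hd
      refine ⟨c', l', hl', ?_⟩
      rw [hsplit, Set.image_union, Set.image_singleton, himg, hx, heq]

lemma arcSet_eq_natInterval (n : ℕ) (hn : 3 ≤ n) (c : ZMod n) (l : ℕ) (hl : l ≤ n - 1) :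
    ∃ a b : ℕ, 1 ≤ a ∧ a ≤ b ∧ b ≤ n ∧
      (arcSet n c l = natInterval n a b ∨
        arcSet n c l = natInterval n b n ∪ natInterval n 1 a) := by
  have hnz : NeZero n := ⟨by omega⟩
  set a0 : ℕ := if c.val = 0 then n else c.val with ha0
  have hvlt : c.val < n := ZMod.val_lt c
  have h1 : 1 ≤ a0 := by
    rw [ha0]; split <;> omega
  have h2 : a0 ≤ n := by
    rw [ha0]; split <;> omega
  have hc : ((a0 : ℕ) : ZMod n) = c := by
    rw [ha0]
    split
    · rename_i h
      rw [ZMod.natCast_self]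
      have : ((c.val : ℕ) : ZMod n) = c := by rw [ZMod.natCast_val, ZMod.cast_id]
      rw [← this, h, Nat.cast_zero]
    · rw [ZMod.natCast_val, ZMod.cast_id]
  rcases le_or_gt (a0 + l) n with hcase | hcase
  · refine ⟨a0, a0 + l, h1, by omega, hcase, Or.inl ?_⟩
    ext x
    simp only [mem_arcSet, natInterval, Set.mem_image, Set.mem_Icc]
    constructor
    · rintro ⟨k, hk, rfl⟩
      exact ⟨a0 + k, ⟨by omega, by omega⟩, by rw [← hc]; push_cast; ring⟩
    · rintro ⟨m, ⟨hm1, hm2⟩, rfl⟩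
      refine ⟨m - a0, by omega, ?_⟩
      rw [← hc, Nat.cast_sub hm1]; ring
  · refine ⟨a0 + l - n, a0, by omega, by omega, h2, Or.inr ?_⟩
    ext x
    simp only [mem_arcSet, natInterval, Set.mem_union, Set.mem_image, Set.mem_Icc]
    constructor
    · rintro ⟨k, hk, rfl⟩
      rcases le_or_gt (a0 + k) n with h | h
      · exact Or.inl ⟨a0 + k, ⟨by omega, h⟩, by rw [← hc]; push_cast; ring⟩
      · right
        refine ⟨a0 + k - n, ⟨by omega, by omega⟩, ?_⟩
        have e : ((a0 + k - n : ℕ) : ZMod n) = ((a0 + k : ℕ) : ZMod n) := by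
          conv_rhs => rw [show a0 + k = (a0 + k - n) + n from by omega]
          push_cast [ZMod.natCast_self]; ring
        rw [e, ← hc]; push_cast; ring
    · rintro (⟨m, ⟨hm1, hm2⟩, rfl⟩ | ⟨m, ⟨hm1, hm2⟩, rfl⟩)
      · refine ⟨m - a0, by omega, ?_⟩
        rw [← hc, Nat.cast_sub hm1]; ring
      · refine ⟨m + n - a0, by omega, ?_⟩
        rw [← hc, Nat.cast_sub (by omega : a0 ≤ m + n)]
        push_cast [ZMod.natCast_self]; ring

/-- The image of an interval `[i,j]` (with `1 ≤ i ≤ j ≤ n`) under a weak endomorphism of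
`C_n` is an arc: either an interval `[a,b]` or a wrap-around `[b,n] ∪ [1,a]`. -/
theorem image_interval_isArc (n : ℕ) (hn : 3 ≤ n) (α : ZMod n → ZMod n)
    (hα : IsWeakEndCycle n α) (i j : ℕ) (h1 : 1 ≤ i) (hij : i ≤ j) (hj : j ≤ n) :
    ∃ a b : ℕ, 1 ≤ a ∧ a ≤ b ∧ b ≤ n ∧
      (α '' natInterval n i j = natInterval n a b ∨
        α '' natInterval n i j = natInterval n b n ∪ natInterval n 1 a) := by
  obtain ⟨c, l, hl, himg⟩ := image_natInterval_arc hn hα i j hij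
  obtain ⟨a, b, ha, hab, hb, h⟩ := arcSet_eq_natInterval n hn c l hl
  exact ⟨a, b, ha, hab, hb, by rw [himg]; exact h⟩
end

section
/- Let α be a weak endomorphism of the cycle graph C_n. Then either α is a permutation belonging to the dihedral group D_{2n}, or the rank (image size) of α is at most ⌊n/2⌋ + 1. -/
/-- The dihedral group `D_{2n}` of automorphisms of `C_n`, generated by the rotation
`i ↦ i + 1` and the reflection `i ↦ 1 - i` (i.e. `i ↦ n - i + 1` mod `n`). -/
def dihedralCycle (n : ℕ) : Subgroup (Equiv.Perm (ZMod n)) :=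
  Subgroup.closure {Equiv.addRight (1 : ZMod n), Equiv.subLeft (1 : ZMod n)}

lemma addRight_pow (n : ℕ) (m : ℕ) :
    (Equiv.addRight (1 : ZMod n)) ^ m = Equiv.addRight (m : ZMod n) := by
  induction m with
  | zero => ext x; simp
  | succ k ih =>
    ext x
    simp only [pow_succ, Equiv.Perm.mul_apply, ih, Equiv.coe_addRight]
    push_cast
    ring

lemma addRight_mem (n : ℕ) [NeZero n] (c : ZMod n) :
    Equiv.addRight c ∈ dihedralCycle n := by
  have h : Equiv.addRight c = (Equiv.addRight (1 : ZMod n)) ^ c.val := by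
    rw [addRight_pow]
    simp [ZMod.natCast_val, ZMod.cast_id]
  rw [h]
  exact Subgroup.pow_mem _ (Subgroup.subset_closure (Set.mem_insert _ _)) _

lemma subLeft_mem (n : ℕ) [NeZero n] (c : ZMod n) :
    Equiv.subLeft c ∈ dihedralCycle n := by
  have h : Equiv.subLeft c = Equiv.addRight (c - 1) * Equiv.subLeft (1 : ZMod n) := by
    ext x
    simp only [Equiv.Perm.mul_apply, Equiv.coe_addRight, Equiv.subLeft_apply]
    ring
  rw [h]
  exact Subgroup.mul_mem _ (addRight_mem n _)
    (Subgroup.subset_closure (Set.mem_insert_of_mem _ rfl))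

/-- A weak endomorphism of `C_n` is either a permutation in `D_{2n}`, or has rank
(image size) at most `⌊n/2⌋ + 1`. -/
theorem wEnd_dihedral_or_rank_le (n : ℕ) (hn : 3 ≤ n) (α : ZMod n → ZMod n)
    (hα : IsWeakEndCycle n α) :
    (∃ σ ∈ dihedralCycle n, α = ⇑σ) ∨ (Set.range α).ncard ≤ n / 2 + 1 := by
  haveI : NeZero n := ⟨by omega⟩
  -- basic arithmetic facts in `ZMod n`
  have h1 : (1 : ZMod n) ≠ 0 := by
    intro h
    have : n ∣ 1 := (ZMod.natCast_eq_zero_iff 1 n).mp (by exact_mod_cast h)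
    have := Nat.le_of_dvd one_pos this
    omega
  have h2 : (1 : ZMod n) ≠ -1 := by
    intro h
    have h2' : ((2 : ℕ) : ZMod n) = 0 := by
      push_cast
      linear_combination h
    have : n ∣ 2 := (ZMod.natCast_eq_zero_iff 2 n).mp h2'
    have := Nat.le_of_dvd two_pos this
    omega
  -- the integer step sequence
  set e : ℕ → ℤ := fun k =>
    if α ((k : ZMod n) + 1) - α (k : ZMod n) = 1 then 1
    else if α ((k : ZMod n) + 1) - α (k : ZMod n) = -1 then -1 else 0 with he_def
  have he' : ∀ k, e k = 1 ∨ e k = 0 ∨ e k = -1 := by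
    intro k
    simp only [he_def]
    split_ifs <;> tauto
  have heval : ∀ k : ℕ, ((e k : ℤ) : ZMod n) = α ((k : ZMod n) + 1) - α (k : ZMod n) := by
    intro k
    have hmem := hα (k : ZMod n)
    simp only [Set.mem_insert_iff, Set.mem_singleton_iff] at hmem
    simp only [he_def]
    split_ifs with ha hb
    · rw [ha]; simp
    · rw [hb]; simp
    · rcases hmem with h | h | h
      · rw [h]; simp
      · exact absurd h ha
      · exact absurd h hb
  -- the lifted walk
  set β : ℕ → ℤ := fun k => ∑ j ∈ Finset.range k, e j with hβ_def
  have hB : ∀ k : ℕ, α ((k : ℕ) : ZMod n) = α 0 + ((β k : ℤ) : ZMod n) := by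
    intro k
    induction k with
    | zero => simp [hβ_def]
    | succ k ih =>
      have hs : ((k + 1 : ℕ) : ZMod n) = (k : ZMod n) + 1 := by push_cast; ring
      have : α ((k : ZMod n) + 1) = α (k : ZMod n) + ((e k : ℤ) : ZMod n) := by
        rw [heval k]; ring
      rw [hs, this, ih, hβ_def]
      simp only [Finset.sum_range_succ]
      push_cast
      ring
  -- β n is a multiple of n with |β n| ≤ n
  have hβn0 : ((β n : ℤ) : ZMod n) = 0 := by
    have := hB n
    rw [ZMod.natCast_self] at this
    have := this.symm
    rwa [add_eq_left] at this
  have hdvd : (n : ℤ) ∣ β n := (ZMod.intCast_zmod_eq_zero_iff_dvd _ n).mp hβn0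
  have habs : |β n| ≤ (n : ℤ) := by
    calc |β n| ≤ ∑ j ∈ Finset.range n, |e j| := Finset.abs_sum_le_sum_abs _ _
    _ ≤ ∑ j ∈ Finset.range n, 1 := by
        apply Finset.sum_le_sum
        intro j _
        rcases he' j with h | h | h <;> simp [h]
    _ = (n : ℤ) := by simp
  have htri : β n = 0 ∨ β n = (n : ℤ) ∨ β n = -(n : ℤ) := by
    obtain ⟨c, hc⟩ := hdvd
    have hn' : (0 : ℤ) < n := by exact_mod_cast (show 0 < n by omega)
    have hb := abs_le.mp habs
    have hc1 : -1 ≤ c := by nlinarith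
    have hc2 : c ≤ 1 := by nlinarith
    interval_cases c
    · right; right; rw [hc]; ring
    · left; rw [hc]; ring
    · right; left; rw [hc]; ring
  rcases htri with hz | hz | hz
  · -- rank bound case
    right
    set S : Finset ℤ := (Finset.range n).image β with hS_def
    have hSne : S.Nonempty := by
      refine ⟨β 0, Finset.mem_image.mpr ⟨0, Finset.mem_range.mpr (by omega), rfl⟩⟩
    set M : ℤ := S.max' hSne with hM_def
    set m0 : ℤ := S.min' hSne with hm0_def
    -- counting sets
    set P : Finset ℕ := (Finset.range n).filter (fun j => e j = 1) with hP_def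
    set Q : Finset ℕ := (Finset.range n).filter (fun j => e j = -1) with hQ_def
    have hsplit : ∀ j, e j = (if e j = 1 then (1 : ℤ) else 0) - (if e j = -1 then 1 else 0) := by
      intro j
      rcases he' j with h | h | h <;> simp [h]
    have hsum : (P.card : ℤ) - Q.card = 0 := by
      have : ∑ j ∈ Finset.range n, e j = (P.card : ℤ) - Q.card := by
        rw [hP_def, hQ_def]
        rw [Finset.sum_congr rfl (fun j _ => hsplit j), Finset.sum_sub_distrib]
        simp [Finset.sum_ite, Finset.sum_const]
      rw [← this]
      exact hz
    have hPQ : P.card = Q.card := by omega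
    have hcard : P.card + Q.card ≤ n := by
      have hdis : Disjoint P Q := by
        rw [Finset.disjoint_left]
        intro a haP haQ
        rw [hP_def, Finset.mem_filter] at haP
        rw [hQ_def, Finset.mem_filter] at haQ
        omega
      calc P.card + Q.card = (P ∪ Q).card := (Finset.card_union_of_disjoint hdis).symm
      _ ≤ (Finset.range n).card := Finset.card_le_card (by
          rw [hP_def, hQ_def]
          exact Finset.union_subset (Finset.filter_subset _ _) (Finset.filter_subset _ _))
      _ = n := Finset.card_range n
    have hp : P.card ≤ n / 2 := by omega
    -- the max-min bound
    obtain ⟨jM, hjM, hjM2⟩ := Finset.mem_image.mp (S.max'_mem hSne)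
    obtain ⟨jm, hjm, hjm2⟩ := Finset.mem_image.mp (S.min'_mem hSne)
    rw [Finset.mem_range] at hjM hjm
    rw [← hM_def] at hjM2
    rw [← hm0_def] at hjm2
    have hMm : M - m0 ≤ (P.card : ℤ) := by
      rcases le_total jm jM with hle | hle
      · have hsum2 : β jM - β jm = ∑ t ∈ Finset.Ico jm jM, e t := by
          rw [Finset.sum_Ico_eq_sub _ hle]
        rw [← hjM2, ← hjm2, hsum2]
        calc ∑ t ∈ Finset.Ico jm jM, e t
            ≤ ∑ t ∈ Finset.Ico jm jM, (if e t = 1 then (1:ℤ) else 0) := by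
              apply Finset.sum_le_sum
              intro t _
              rcases he' t with h | h | h <;> simp [h]
        _ = (((Finset.Ico jm jM).filter (fun t => e t = 1)).card : ℤ) := by
              simp [Finset.sum_ite, Finset.sum_const]
        _ ≤ (P.card : ℤ) := by
              have : (Finset.Ico jm jM).filter (fun t => e t = 1) ⊆ P := by
                rw [hP_def]
                apply Finset.filter_subset_filter
                intro t ht
                rw [Finset.mem_Ico] at ht
                rw [Finset.mem_range]
                omega
              exact_mod_cast Finset.card_le_card this
      · have hsum2 : β jm - β jM = ∑ t ∈ Finset.Ico jM jm, e t := by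
          rw [Finset.sum_Ico_eq_sub _ hle]
        have : M - m0 = -(β jm - β jM) := by rw [← hjM2, ← hjm2]; ring
        rw [this, hsum2, ← Finset.sum_neg_distrib]
        calc ∑ t ∈ Finset.Ico jM jm, -e t
            ≤ ∑ t ∈ Finset.Ico jM jm, (if e t = -1 then (1:ℤ) else 0) := by
              apply Finset.sum_le_sum
              intro t _
              rcases he' t with h | h | h <;> simp [h]
        _ = (((Finset.Ico jM jm).filter (fun t => e t = -1)).card : ℤ) := by
              simp [Finset.sum_ite, Finset.sum_const]
        _ ≤ (Q.card : ℤ) := by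
              have : (Finset.Ico jM jm).filter (fun t => e t = -1) ⊆ Q := by
                rw [hQ_def]
                apply Finset.filter_subset_filter
                intro t ht
                rw [Finset.mem_Ico] at ht
                rw [Finset.mem_range]
                omega
              exact_mod_cast Finset.card_le_card this
        _ = (P.card : ℤ) := by exact_mod_cast hPQ.symm
    -- assemble the cardinality bound
    have hsub : Set.range α ⊆
        ↑((Finset.Icc m0 M).image (fun z : ℤ => α 0 + ((z : ℤ) : ZMod n))) := by
      rintro x ⟨i, rfl⟩
      refine Finset.mem_coe.mpr (Finset.mem_image.mpr ⟨β i.val, ?_, ?_⟩)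
      · have hmem : β i.val ∈ S :=
          Finset.mem_image.mpr ⟨i.val, Finset.mem_range.mpr (ZMod.val_lt i), rfl⟩
        exact Finset.mem_Icc.mpr ⟨S.min'_le _ hmem, S.le_max' _ hmem⟩
      · have := hB i.val
        rw [show ((i.val : ℕ) : ZMod n) = i by simp [ZMod.natCast_val, ZMod.cast_id]] at this
        exact this.symm
    calc (Set.range α).ncard
        ≤ ((↑((Finset.Icc m0 M).image (fun z : ℤ => α 0 + ((z : ℤ) : ZMod n))) : Set (ZMod n))).ncard :=
          Set.ncard_le_ncard hsub (Finset.finite_toSet _)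
    _ = ((Finset.Icc m0 M).image (fun z : ℤ => α 0 + ((z : ℤ) : ZMod n))).card :=
          Set.ncard_coe_finset _
    _ ≤ (Finset.Icc m0 M).card := Finset.card_image_le
    _ = (M + 1 - m0).toNat := Int.card_Icc m0 M
    _ ≤ n / 2 + 1 := by
          rw [Int.toNat_le]
          push_cast
          omega
  · -- all steps +1 : rotation
    left
    have hall : ∀ j ∈ Finset.range n, e j = 1 := by
      have hzero : ∑ j ∈ Finset.range n, ((1 : ℤ) - e j) = 0 := by
        have hs : ∑ j ∈ Finset.range n, e j = (n : ℤ) := hz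
        rw [Finset.sum_sub_distrib, hs]
        simp
      have := (Finset.sum_eq_zero_iff_of_nonneg (fun j _ => by
        rcases he' j with h | h | h <;> simp [h])).mp hzero
      intro j hj
      have := this j hj
      omega
    have hβk : ∀ k, k < n → β k = k := by
      intro k hk
      show ∑ j ∈ Finset.range k, e j = (k : ℤ)
      rw [Finset.sum_congr rfl (fun j hj => hall j (Finset.mem_range.mpr
        (lt_of_lt_of_le (Finset.mem_range.mp hj) (le_of_lt hk))))]
      simp
    refine ⟨Equiv.addRight (α 0), addRight_mem n _, ?_⟩
    funext i
    have := hB i.val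
    rw [show ((i.val : ℕ) : ZMod n) = i by simp [ZMod.natCast_val, ZMod.cast_id],
      hβk i.val (ZMod.val_lt i)] at this
    rw [this]
    simp only [Equiv.coe_addRight]
    have hv : ((i.val : ℕ) : ZMod n) = i := by simp [ZMod.natCast_val, ZMod.cast_id]
    push_cast [hv]
    ring
  · -- all steps -1 : reflection
    left
    have hall : ∀ j ∈ Finset.range n, e j = -1 := by
      have hzero : ∑ j ∈ Finset.range n, (e j + 1) = 0 := by
        have hs : ∑ j ∈ Finset.range n, e j = -(n : ℤ) := hz
        rw [Finset.sum_add_distrib, hs]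
        simp
      have := (Finset.sum_eq_zero_iff_of_nonneg (fun j _ => by
        rcases he' j with h | h | h <;> simp [h])).mp hzero
      intro j hj
      have := this j hj
      omega
    have hβk : ∀ k, k < n → β k = -k := by
      intro k hk
      show ∑ j ∈ Finset.range k, e j = -(k : ℤ)
      rw [Finset.sum_congr rfl (fun j hj => hall j (Finset.mem_range.mpr
        (lt_of_lt_of_le (Finset.mem_range.mp hj) (le_of_lt hk))))]
      simp
    refine ⟨Equiv.subLeft (α 0), subLeft_mem n _, ?_⟩
    funext i
    have := hB i.val
    rw [show ((i.val : ℕ) : ZMod n) = i by simp [ZMod.natCast_val, ZMod.cast_id],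
      hβk i.val (ZMod.val_lt i)] at this
    rw [this]
    simp only [Equiv.subLeft_apply]
    have hv : ((i.val : ℕ) : ZMod n) = i := by simp [ZMod.natCast_val, ZMod.cast_id]
    push_cast [hv]
    ring
end

section
/- Let n be even and let α be a weak endomorphism of the cycle graph C_n with rank exactly n/2 + 1. Then α is an endomorphism of C_n, i.e. |α(i+1) - α(i)| ∈ {1, n-1} for all i. -/
private lemma aux_sum_le_ups (e : ℕ → ℤ) (hmem : ∀ k, e k = 1 ∨ e k = -1 ∨ e k = 0)
    (s : Finset ℕ) :
    ∑ j ∈ s, e j ≤ ((s.filter (fun j => e j = 1)).card : ℤ) := by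
  calc ∑ j ∈ s, e j ≤ ∑ j ∈ s, (if e j = 1 then (1:ℤ) else 0) := by
        apply Finset.sum_le_sum
        intro j _
        rcases hmem j with h | h | h <;> rw [h] <;> norm_num
    _ = _ := by rw [Finset.sum_boole]

private lemma aux_neg_sum_le_downs (e : ℕ → ℤ) (hmem : ∀ k, e k = 1 ∨ e k = -1 ∨ e k = 0)
    (s : Finset ℕ) :
    -∑ j ∈ s, e j ≤ ((s.filter (fun j => e j = -1)).card : ℤ) := by
  calc -∑ j ∈ s, e j = ∑ j ∈ s, -e j := by rw [Finset.sum_neg_distrib]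
    _ ≤ ∑ j ∈ s, (if e j = -1 then (1:ℤ) else 0) := by
        apply Finset.sum_le_sum
        intro j _
        rcases hmem j with h | h | h <;> rw [h] <;> norm_num
    _ = _ := by rw [Finset.sum_boole]

/-- Key combinatorial lemma: for a cyclic walk with steps in `{1,-1,0}` summing to `0`,
with at least one zero step, twice the spread is at most `n - 1`. -/
private lemma aux_spread (n p q i0 : ℕ) (e : ℕ → ℤ)
    (hmem : ∀ k, e k = 1 ∨ e k = -1 ∨ e k = 0)
    (hp : p < n) (hq : q < n) (hi0 : i0 < n) (hqp : q ≤ p) (hzero : e i0 = 0)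
    (hFn : ∑ j ∈ Finset.range n, e j = 0) :
    2 * ((∑ j ∈ Finset.range p, e j) - ∑ j ∈ Finset.range q, e j) + 1 ≤ (n : ℤ) := by
  set A : Finset ℕ := (Finset.Ico q p).filter (fun j => e j = 1) with hA_def
  set B : Finset ℕ := ((Finset.range q) ∪ (Finset.Ico p n)).filter (fun j => e j = -1) with hB_def
  have hIco : ∑ j ∈ Finset.Ico q p, e j
      = (∑ j ∈ Finset.range p, e j) - ∑ j ∈ Finset.range q, e j :=
    Finset.sum_Ico_eq_sub e hqp
  have hA : (∑ j ∈ Finset.range p, e j) - (∑ j ∈ Finset.range q, e j) ≤ (A.card : ℤ) := by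
    rw [← hIco]; exact aux_sum_le_ups e hmem _
  have hdisjRI : Disjoint (Finset.range q) (Finset.Ico p n) := by
    rw [Finset.disjoint_left]
    intro a ha hb
    rw [Finset.mem_range] at ha
    rw [Finset.mem_Ico] at hb
    omega
  have hsumU : ∑ j ∈ (Finset.range q) ∪ (Finset.Ico p n), e j
      = (∑ j ∈ Finset.range q, e j) + ((∑ j ∈ Finset.range n, e j) - ∑ j ∈ Finset.range p, e j) := by
    rw [Finset.sum_union hdisjRI, Finset.sum_Ico_eq_sub e (le_of_lt hp)]
  have hB : (∑ j ∈ Finset.range p, e j) - (∑ j ∈ Finset.range q, e j) ≤ (B.card : ℤ) := by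
    have := aux_neg_sum_le_downs e hmem ((Finset.range q) ∪ (Finset.Ico p n))
    rw [hsumU, hFn] at this
    rw [hB_def]
    linarith
  -- cardinality bound
  have hABdisj : Disjoint A B := by
    rw [Finset.disjoint_left]
    intro a ha hb
    rw [hA_def, Finset.mem_filter] at ha
    rw [hB_def, Finset.mem_filter] at hb
    omega
  have hABi0 : Disjoint (A ∪ B) {i0} := by
    rw [Finset.disjoint_right]
    intro a ha hb
    rw [Finset.mem_singleton] at ha
    subst ha
    rw [Finset.mem_union, hA_def, hB_def, Finset.mem_filter, Finset.mem_filter] at hb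
    omega
  have hsub : (A ∪ B) ∪ {i0} ⊆ Finset.range n := by
    intro a ha
    rw [Finset.mem_union, Finset.mem_union, hA_def, hB_def, Finset.mem_filter,
      Finset.mem_filter, Finset.mem_singleton, Finset.mem_Ico, Finset.mem_union,
      Finset.mem_range, Finset.mem_Ico] at ha
    rw [Finset.mem_range]
    omega
  have hcard : A.card + B.card + 1 ≤ n := by
    have h1 : ((A ∪ B) ∪ {i0}).card ≤ n := by
      simpa using Finset.card_le_card hsub
    rw [Finset.card_union_of_disjoint hABi0, Finset.card_union_of_disjoint hABdisj] at h1
    simpa using h1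
  have : (A.card : ℤ) + B.card + 1 ≤ (n : ℤ) := by exact_mod_cast hcard
  omega

/-- For even `n`, a weak endomorphism of `C_n` of rank exactly `n/2 + 1` is an
endomorphism: consecutive images always differ by `1` or `-1` (i.e. `n-1`) mod `n`. -/
theorem wEnd_rank_half_add_one_isEnd (n : ℕ) (hn : 4 ≤ n) (heven : Even n)
    (α : ZMod n → ZMod n) (hα : IsWeakEndCycle n α)
    (hrank : (Set.range α).ncard = n / 2 + 1) :
    ∀ i : ZMod n, α (i + 1) - α i ∈ ({1, -1} : Set (ZMod n)) := by
  haveI : NeZero n := ⟨by omega⟩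
  haveI : Fact (1 < n) := ⟨by omega⟩
  intro i
  have hmemi := hα i
  simp only [Set.mem_insert_iff, Set.mem_singleton_iff] at hmemi ⊢
  rcases hmemi with h | h | h
  · -- the contradiction case: α (i+1) = α i
    exfalso
    have h10 : (1 : ZMod n) ≠ 0 := one_ne_zero
    have hm10 : (-1 : ZMod n) ≠ 0 := by
      intro hc
      exact h10 (by rw [← neg_neg (1 : ZMod n), hc, neg_zero])
    set D : ℕ → ZMod n := fun k => α ((k : ZMod n) + 1) - α (k : ZMod n) with hD_def
    set e : ℕ → ℤ := fun k => if D k = 1 then 1 else if D k = -1 then -1 else 0 with he_def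
    set F : ℕ → ℤ := fun k => ∑ j ∈ Finset.range k, e j with hF_def
    have hmem : ∀ k, e k = 1 ∨ e k = -1 ∨ e k = 0 := by
      intro k
      simp only [he_def]
      split_ifs <;> simp
    have he_cast : ∀ k, ((e k : ℤ) : ZMod n) = D k := by
      intro k
      have hk := hα ((k : ZMod n))
      simp only [Set.mem_insert_iff, Set.mem_singleton_iff] at hk
      simp only [he_def]
      split_ifs with h1 h2
      · simp [h1]
      · simp [h2]
      · rcases hk with hk | hk | hk
        · simp [hD_def, hk]
        · exact absurd hk h1
        · exact absurd hk h2
    have hkey : ∀ k : ℕ, α (k : ZMod n) = α 0 + ((F k : ℤ) : ZMod n) := by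
      intro k
      induction k with
      | zero => simp [hF_def]
      | succ k ih =>
        have hs : F (k + 1) = F k + e k := Finset.sum_range_succ e k
        have hDk : α ((k : ZMod n) + 1) = α (k : ZMod n) + D k := by
          rw [hD_def]; ring
        have : ((k + 1 : ℕ) : ZMod n) = (k : ZMod n) + 1 := by push_cast; ring
        rw [this, hDk, ih, hs, ← he_cast k]
        push_cast
        ring
    have hF0 : F 0 = 0 := by simp [hF_def]
    -- zero step
    set i0 : ℕ := i.val with hi0_def
    have hi0n : i0 < n := ZMod.val_lt i
    have hi0cast : ((i0 : ℕ) : ZMod n) = i := by simp [hi0_def, ZMod.natCast_val]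
    have he_i0 : e i0 = 0 := by
      have hD0 : D i0 = 0 := by rw [hD_def]; simp only [hi0cast]; exact h
      rw [he_def]
      simp only [hD0]
      rw [if_neg (fun hc => h10 hc.symm), if_neg (fun hc => hm10 hc.symm)]
    -- F n = 0
    have hFnZ : ((F n : ℤ) : ZMod n) = 0 := by
      have hk := hkey n
      rw [ZMod.natCast_self] at hk
      have := hk.symm
      rwa [left_eq_add] at hk
    have hdvd : (n : ℤ) ∣ F n := (ZMod.intCast_zmod_eq_zero_iff_dvd _ _).mp hFnZ
    have hFn_ub : F n ≤ (n : ℤ) - 1 := by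
      have hsplit : e i0 + ∑ j ∈ (Finset.range n).erase i0, e j = F n := by
        rw [hF_def]
        exact Finset.add_sum_erase _ e (Finset.mem_range.mpr hi0n)
      have hb : ∑ j ∈ (Finset.range n).erase i0, e j ≤ ((Finset.range n).erase i0).card • (1 : ℤ) :=
        Finset.sum_le_card_nsmul _ _ _ (fun j _ => by rcases hmem j with h' | h' | h' <;> omega)
      rw [Finset.card_erase_of_mem (Finset.mem_range.mpr hi0n), Finset.card_range] at hb
      have hcd : (((n - 1 : ℕ)) • (1:ℤ)) = ((n : ℤ) - 1) := by
        simp only [nsmul_eq_mul, mul_one]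
        omega
      rw [hcd] at hb
      omega
    have hFn_lb : -((n : ℤ) - 1) ≤ F n := by
      have hsplit : e i0 + ∑ j ∈ (Finset.range n).erase i0, e j = F n := by
        rw [hF_def]
        exact Finset.add_sum_erase _ e (Finset.mem_range.mpr hi0n)
      have hb : ((Finset.range n).erase i0).card • (-1 : ℤ) ≤ ∑ j ∈ (Finset.range n).erase i0, e j :=
        Finset.card_nsmul_le_sum _ _ _ (fun j _ => by rcases hmem j with h' | h' | h' <;> omega)
      rw [Finset.card_erase_of_mem (Finset.mem_range.mpr hi0n), Finset.card_range] at hb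
      have hcd : (((n - 1 : ℕ)) • (-1:ℤ)) = -((n : ℤ) - 1) := by
        simp only [nsmul_eq_mul, mul_neg_one]
        omega
      rw [hcd] at hb
      omega
    have hFn0 : F n = 0 := by
      obtain ⟨c, hc⟩ := hdvd
      have hn4 : (4 : ℤ) ≤ n := by exact_mod_cast hn
      have hc1 : c = 0 := by nlinarith
      rw [hc, hc1, mul_zero]
    -- max and min
    obtain ⟨p, hpmem, hpmax⟩ := Finset.exists_max_image (Finset.range n) F ⟨0, Finset.mem_range.mpr (by omega)⟩
    obtain ⟨q, hqmem, hqmin⟩ := Finset.exists_min_image (Finset.range n) F ⟨0, Finset.mem_range.mpr (by omega)⟩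
    rw [Finset.mem_range] at hpmem hqmem
    -- spread bound
    have hspread : 2 * (F p - F q) + 1 ≤ (n : ℤ) := by
      rcases le_or_gt q p with hqp | hpq
      · exact aux_spread n p q i0 e hmem hpmem hqmem hi0n hqp he_i0 hFn0
      · have := aux_spread n q p i0 (fun k => -e k)
          (fun k => by rcases hmem k with h' | h' | h' <;> simp [h'])
          hqmem hpmem hi0n (le_of_lt hpq) (by simp [he_i0])
          (by rw [Finset.sum_neg_distrib]; show -F n = 0; rw [hFn0]; ring)
        simp only [Finset.sum_neg_distrib] at this
        have hFp : F p = ∑ j ∈ Finset.range p, e j := rfl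
        have hFq : F q = ∑ j ∈ Finset.range q, e j := rfl
        omega
    -- rank bound
    set T : Finset ℤ := Finset.image F (Finset.range n) with hT_def
    have hTsub : T ⊆ Finset.Icc (F q) (F p) := by
      intro z hz
      rw [hT_def, Finset.mem_image] at hz
      obtain ⟨k, hk, rfl⟩ := hz
      rw [Finset.mem_Icc]
      exact ⟨hqmin k hk, hpmax k hk⟩
    have hTcard : (T.card : ℤ) ≤ F p - F q + 1 := by
      have h1 : T.card ≤ (Finset.Icc (F q) (F p)).card := Finset.card_le_card hTsub
      rw [Int.card_Icc] at h1
      have hge : F q ≤ F p := hqmin p (Finset.mem_range.mpr hpmem)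
      have h3 : (T.card : ℤ) ≤ ((F p + 1 - F q).toNat : ℤ) := by exact_mod_cast h1
      omega
    have hrange : Set.range α ⊆ (fun z : ℤ => α 0 + (z : ZMod n)) '' (T : Set ℤ) := by
      rintro _ ⟨x, rfl⟩
      refine ⟨F x.val, ?_, ?_⟩
      · rw [hT_def]
        simp only [Finset.coe_image, Set.mem_image, Finset.mem_coe, Finset.mem_range]
        exact ⟨x.val, ZMod.val_lt x, rfl⟩
      · have := hkey x.val
        rw [show ((x.val : ℕ) : ZMod n) = x from by simp [ZMod.natCast_val]] at this
        exact this.symm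
    have hrank_le : (Set.range α).ncard ≤ T.card := by
      calc (Set.range α).ncard
          ≤ ((fun z : ℤ => α 0 + (z : ZMod n)) '' (T : Set ℤ)).ncard :=
            Set.ncard_le_ncard hrange (((T : Set ℤ).toFinite).image _)
        _ ≤ (T : Set ℤ).ncard := Set.ncard_image_le ((T : Set ℤ).toFinite)
        _ = T.card := Set.ncard_coe_finset T
    rw [hrank] at hrank_le
    obtain ⟨t, ht⟩ := heven
    have h1 : n / 2 + 1 ≤ T.card := hrank_le
    have h2 : ((n / 2 + 1 : ℕ) : ℤ) ≤ (T.card : ℤ) := by exact_mod_cast h1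
    have h3 : (n : ℤ) = 2 * ((n / 2 : ℕ) : ℤ) := by
      have : n = t + t := ht
      omega
    omega
  · left; exact h
  · right; exact h
end

section
/- For n ≥ 4, the monoid of strong weak endomorphisms of the cycle graph C_n equals the union of the strong endomorphisms and the n constant maps: swEnd(C_n) = sEnd(C_n) ∪ K_n. -/
/-- `α` is a strong weak endomorphism of `C_n`. -/
def IsStrongWeakEndCycle (n : ℕ) (α : ZMod n → ZMod n) : Prop :=
  ∀ u v : ZMod n, (cycleAdj n u v ∧ α u ≠ α v) ↔ cycleAdj n (α u) (α v)

lemma aux_one_ne_zero (n : ℕ) (hn : 4 ≤ n) : (1 : ZMod n) ≠ 0 := by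
  intro h
  have : ((1 : ℕ) : ZMod n) = 0 := by push_cast; exact h
  have : NeZero n := ⟨by omega⟩
  have := (ZMod.natCast_eq_zero_iff 1 n).mp ‹((1:ℕ):ZMod n) = 0›
  have := Nat.le_of_dvd (by norm_num) this
  omega

lemma aux_three_ne_zero (n : ℕ) (hn : 4 ≤ n) : (3 : ZMod n) ≠ 0 := by
  intro h
  have h3 : ((3 : ℕ) : ZMod n) = 0 := by push_cast; exact h
  have : NeZero n := ⟨by omega⟩
  have := (ZMod.natCast_eq_zero_iff 3 n).mp h3
  have := Nat.le_of_dvd (by norm_num) this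
  omega

lemma aux_step (n : ℕ) (hn : 4 ≤ n) (α : ZMod n → ZMod n)
    (hα : IsStrongWeakEndCycle n α) (v : ZMod n) (h : α v = α (v + 1)) :
    α (v + 1) = α (v + 2) := by
  by_contra hne
  have hadj : cycleAdj n (α (v+1)) (α (v+2)) :=
    (hα (v+1) (v+2)).mp ⟨Or.inl (by ring), hne⟩
  rw [← h] at hadj
  have h2 := ((hα v (v+2)).mpr hadj).1
  rcases h2 with h2 | h2
  · have : (2 : ZMod n) = 1 := by rw [← h2]; ring
    have : (1 : ZMod n) = 0 := by linear_combination this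
    exact aux_one_ne_zero n hn this
  · have : (3 : ZMod n) = 0 := by linear_combination -h2
    exact aux_three_ne_zero n hn this

lemma aux_const (n : ℕ) (hn : 4 ≤ n) (α : ZMod n → ZMod n)
    (hα : IsStrongWeakEndCycle n α) (u : ZMod n) (h : α u = α (u + 1)) :
    ∀ v, α v = α u := by
  have key : ∀ k : ℕ, α (u + k) = α (u + k + 1) := by
    intro k
    induction k with
    | zero => simpa using h
    | succ m ih =>
      have := aux_step n hn α hα (u + m) ih
      have e1 : u + (m+1 : ℕ) = u + m + 1 := by push_cast; ring
      rw [e1]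
      convert this using 2
      ring
  have key2 : ∀ k : ℕ, α u = α (u + k) := by
    intro k
    induction k with
    | zero => simp
    | succ m ih =>
      have := key m
      have e2 : u + (m+1 : ℕ) = u + m + 1 := by push_cast; ring
      rw [e2, ← this]
      exact ih
  intro v
  have : NeZero n := ⟨by omega⟩
  have := key2 (v - u).val
  rw [ZMod.natCast_val, ZMod.cast_id] at this
  rw [show u + (v - u) = v from by ring] at this
  exact this.symm

/-- For `n ≥ 4`, the strong weak endomorphisms of `C_n` are exactly the strong
endomorphisms together with the `n` constant maps: `swEnd(C_n) = sEnd(C_n) ∪ K_n`. -/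
theorem swEnd_eq_sEnd_union_const (n : ℕ) (hn : 4 ≤ n) :
    {α : ZMod n → ZMod n | IsStrongWeakEndCycle n α} =
      {α : ZMod n → ZMod n | IsStrongEndCycle n α} ∪
        {α : ZMod n → ZMod n | ∃ c : ZMod n, α = Function.const (ZMod n) c} := by
  ext α
  simp only [Set.mem_setOf_eq, Set.mem_union]
  constructor
  · intro hα
    by_cases hc : ∀ v, α v = α 0
    · right
      exact ⟨α 0, funext fun v => hc v⟩
    · left
      -- α is not constant; show it is a strong endomorphism
      have hne : ∀ u, α u ≠ α (u + 1) := by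
        intro u h
        apply hc
        intro v
        have h1 := aux_const n hn α hα u h v
        have h2 := aux_const n hn α hα u h 0
        rw [h1, h2]
      intro u v
      constructor
      · intro huv
        apply (hα u v).mp
        refine ⟨huv, ?_⟩
        rcases huv with h | h
        · have : v = u + 1 := by linear_combination h
          rw [this]; exact hne u
        · have : u = v + 1 := by linear_combination h
          rw [this]
          exact fun hh => hne v hh.symm
      · intro h
        exact ((hα u v).mpr h).1
  · rintro (hα | ⟨c, rfl⟩)
    · intro u v
      constructor
      · rintro ⟨h1, _⟩
        exact (hα u v).mp h1
      · intro h
        refine ⟨(hα u v).mpr h, ?_⟩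
        intro he
        rw [he] at h
        rcases h with h | h <;>
          exact aux_one_ne_zero n hn (by linear_combination -h)
    · intro u v
      simp only [Function.const_apply]
      constructor
      · rintro ⟨_, h⟩
        exact absurd rfl h
      · rintro (h | h) <;>
          exact absurd (by linear_combination -h) (aux_one_ne_zero n hn)
end

section
/- For n ≥ 5, swEnd(C_n) = Aut(C_n) ∪ K_n, and hence |swEnd(C_n)| = 3n. -/
/-- `α` is an automorphism of `C_n`: a bijection preserving adjacency both ways. -/
def IsAutCycle (n : ℕ) (α : ZMod n → ZMod n) : Prop :=
  Function.Bijective α ∧ ∀ u v : ZMod n, cycleAdj n u v ↔ cycleAdj n (α u) (α v)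

namespace SwEndAux

variable {n : ℕ}

lemma cast_ne_zero (hn : 5 ≤ n) {k : ℕ} (hk : 0 < k) (hk4 : k ≤ 4) : (k : ZMod n) ≠ 0 := by
  rw [Ne, ZMod.natCast_eq_zero_iff]
  intro h
  have := Nat.le_of_dvd hk h
  omega

lemma one_ne (hn : 5 ≤ n) : (1 : ZMod n) ≠ 0 := by
  have := cast_ne_zero hn (k := 1) (by norm_num) (by norm_num); simpa using this

lemma two_ne (hn : 5 ≤ n) : (2 : ZMod n) ≠ 0 := by
  have := cast_ne_zero hn (k := 2) (by norm_num) (by norm_num); simpa using this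

lemma three_ne (hn : 5 ≤ n) : (3 : ZMod n) ≠ 0 := by
  have := cast_ne_zero hn (k := 3) (by norm_num) (by norm_num); simpa using this

lemma four_ne (hn : 5 ≤ n) : (4 : ZMod n) ≠ 0 := by
  have := cast_ne_zero hn (k := 4) (by norm_num) (by norm_num); simpa using this

lemma adj_succ (u : ZMod n) : cycleAdj n u (u + 1) := Or.inl (by ring)

lemma not_adj_two (hn : 5 ≤ n) (u : ZMod n) : ¬ cycleAdj n u (u + 2) := by
  rintro (hc | hc)
  · exact one_ne hn (by linear_combination hc)
  · exact three_ne hn (by linear_combination -hc)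

lemma not_adj_three (hn : 5 ≤ n) (u : ZMod n) : ¬ cycleAdj n u (u + 3) := by
  rintro (hc | hc)
  · exact two_ne hn (by linear_combination hc)
  · exact four_ne hn (by linear_combination -hc)

lemma const_mem (hn : 5 ≤ n) (c : ZMod n) :
    IsStrongWeakEndCycle n (Function.const (ZMod n) c) := by
  intro u v
  constructor
  · rintro ⟨-, hne⟩; exact absurd rfl hne
  · rintro (hc | hc) <;> simp only [Function.const_apply, sub_self] at hc <;>
      exact absurd hc.symm (one_ne hn)

lemma aut_mem (hn : 5 ≤ n) {α : ZMod n → ZMod n} (hA : IsAutCycle n α) :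
    IsStrongWeakEndCycle n α := by
  intro u v
  constructor
  · rintro ⟨hadj, -⟩; exact (hA.2 u v).mp hadj
  · intro hadj
    refine ⟨(hA.2 u v).mpr hadj, fun he => ?_⟩
    rcases hadj with hc | hc
    · exact one_ne hn (by linear_combination -hc - he)
    · exact one_ne hn (by linear_combination -hc + he)

lemma add_aut (c : ZMod n) : IsAutCycle n (fun x => c + x) := by
  refine ⟨(Equiv.addLeft c).bijective, fun u v => ?_⟩
  unfold cycleAdj
  rw [show (c + v) - (c + u) = v - u by ring, show (c + u) - (c + v) = u - v by ring]

lemma sub_aut (c : ZMod n) : IsAutCycle n (fun x => c - x) := by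
  refine ⟨(Equiv.subLeft c).bijective, fun u v => ?_⟩
  unfold cycleAdj
  rw [show (c - v) - (c - u) = u - v by ring, show (c - u) - (c - v) = v - u by ring]
  exact or_comm

lemma classify (hn : 5 ≤ n) {α : ZMod n → ZMod n} (h : IsStrongWeakEndCycle n α) :
    (∃ c, α = Function.const (ZMod n) c) ∨
      (∃ c, α = fun x => c + x) ∨ (∃ c, α = fun x => c - x) := by
  have : NeZero n := ⟨by omega⟩
  -- the step differences belong to {0, 1, -1}
  have hd : ∀ u : ZMod n, α (u + 1) - α u = 0 ∨ α (u + 1) - α u = 1 ∨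
      α (u + 1) - α u = -1 := by
    intro u
    by_cases he : α u = α (u + 1)
    · exact Or.inl (by rw [← he]; ring)
    · rcases (h u (u + 1)).mp ⟨adj_succ u, he⟩ with hc | hc
      · exact Or.inr (Or.inl hc)
      · exact Or.inr (Or.inr (by linear_combination -hc))
  have hB2 : ∀ u : ZMod n, ¬ cycleAdj n (α u) (α (u + 2)) :=
    fun u hc => not_adj_two hn u ((h u (u + 2)).mpr hc).1
  have hB3 : ∀ u : ZMod n, ¬ cycleAdj n (α u) (α (u + 3)) :=
    fun u hc => not_adj_three hn u ((h u (u + 3)).mpr hc).1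
  -- the step difference is constant
  have hstep : ∀ u : ZMod n, α (u + 1 + 1) - α (u + 1) = α (u + 1) - α u := by
    intro u
    have e2 : u + 1 + 1 = u + 2 := by ring
    have e3 : u + 1 + 2 = u + 3 := by ring
    have e3' : u + 2 + 1 = u + 3 := by ring
    have hdu1 := hd (u + 1)
    have hdu2 := hd (u + 2)
    rw [e2] at hdu1 ⊢
    rw [e3'] at hdu2
    have hb2 := hB2 u
    have hb2' := hB2 (u + 1)
    rw [e3] at hb2'
    have hb3 := hB3 u
    rcases hd u with h0 | h1 | hm1
    · rcases hdu1 with k0 | k1 | km1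
      · rw [k0, h0]
      · exact absurd (Or.inl (show α (u + 2) - α u = 1 by linear_combination k1 + h0)) hb2
      · exact absurd (Or.inr (show α u - α (u + 2) = 1 by linear_combination -km1 - h0)) hb2
    · rcases hdu1 with k0 | k1 | km1
      · exact absurd (Or.inl (show α (u + 2) - α u = 1 by linear_combination k0 + h1)) hb2
      · rw [k1, h1]
      · exfalso
        rcases hdu2 with m0 | m1 | mm1
        · exact hb2' (Or.inr (show α (u + 1) - α (u + 3) = 1 by
            linear_combination -m0 - km1))
        · exact hb3 (Or.inl (show α (u + 3) - α u = 1 by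
            linear_combination m1 + km1 + h1))
        · exact hb3 (Or.inr (show α u - α (u + 3) = 1 by
            linear_combination -mm1 - km1 - h1))
    · rcases hdu1 with k0 | k1 | km1
      · exact absurd (Or.inr (show α u - α (u + 2) = 1 by linear_combination -k0 - hm1)) hb2
      · exfalso
        rcases hdu2 with m0 | m1 | mm1
        · exact hb2' (Or.inl (show α (u + 3) - α (u + 1) = 1 by
            linear_combination m0 + k1))
        · exact hb3 (Or.inl (show α (u + 3) - α u = 1 by
            linear_combination m1 + k1 + hm1))
        · exact hb3 (Or.inr (show α u - α (u + 3) = 1 by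
            linear_combination -mm1 - k1 - hm1))
      · rw [km1, hm1]
  -- hence the difference equals `α 1 - α 0` everywhere
  have key : ∀ k : ℕ, α ((k : ZMod n) + 1) - α (k : ZMod n) = α 1 - α 0 := by
    intro k
    induction k with
    | zero => simp
    | succ m ih =>
      push_cast
      rw [hstep (m : ZMod n)]
      exact ih
  have keyα : ∀ k : ℕ, α (k : ZMod n) = α 0 + (α 1 - α 0) * k := by
    intro k
    induction k with
    | zero => simp
    | succ m ih =>
      push_cast
      linear_combination ih + key m
  have hall : ∀ x : ZMod n, α x = α 0 + (α 1 - α 0) * x := by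
    intro x
    have hx : ((x.val : ℕ) : ZMod n) = x := ZMod.natCast_rightInverse x
    have := keyα x.val
    rwa [hx] at this
  have hd0 := hd 0
  rw [zero_add] at hd0
  rcases hd0 with h0 | h1 | hm1
  · refine Or.inl ⟨α 0, funext fun x => ?_⟩
    rw [hall x, h0]
    simp [Function.const]
  · refine Or.inr (Or.inl ⟨α 0, funext fun x => ?_⟩)
    rw [hall x, h1]
    ring
  · refine Or.inr (Or.inr ⟨α 0, funext fun x => ?_⟩)
    rw [hall x, hm1]
    ring

/-- The parametrization of all strong weak endomorphisms. -/
def swf (n : ℕ) : Fin 3 × ZMod n → (ZMod n → ZMod n) := fun p =>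
  if p.1.val = 0 then Function.const (ZMod n) p.2
  else if p.1.val = 1 then fun x => p.2 + x
  else fun x => p.2 - x

end SwEndAux

open SwEndAux in
/-- For `n ≥ 5`, `swEnd(C_n) = Aut(C_n) ∪ K_n` and hence `|swEnd(C_n)| = 3n`. -/
theorem swEnd_eq_aut_union_const (n : ℕ) (hn : 5 ≤ n) :
    {α : ZMod n → ZMod n | IsStrongWeakEndCycle n α} =
      {α : ZMod n → ZMod n | IsAutCycle n α} ∪
        {α : ZMod n → ZMod n | ∃ c : ZMod n, α = Function.const (ZMod n) c} ∧
    Nat.card {α : ZMod n → ZMod n | IsStrongWeakEndCycle n α} = 3 * n := by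
  constructor
  · ext α
    simp only [Set.mem_setOf_eq, Set.mem_union]
    constructor
    · intro hα
      rcases classify hn hα with ⟨c, rfl⟩ | ⟨c, rfl⟩ | ⟨c, rfl⟩
      · exact Or.inr ⟨c, rfl⟩
      · exact Or.inl (add_aut c)
      · exact Or.inl (sub_aut c)
    · rintro (hA | ⟨c, rfl⟩)
      · exact aut_mem hn hA
      · exact const_mem hn c
  · have hrange : {α : ZMod n → ZMod n | IsStrongWeakEndCycle n α} = Set.range (swf n) := by
      ext α
      simp only [Set.mem_setOf_eq, Set.mem_range]
      constructor
      · intro hα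
        rcases classify hn hα with ⟨c, rfl⟩ | ⟨c, rfl⟩ | ⟨c, rfl⟩
        · exact ⟨(0, c), by norm_num [swf]⟩
        · exact ⟨(1, c), by norm_num [swf]⟩
        · exact ⟨(2, c), by norm_num [swf]⟩
      · rintro ⟨⟨i, c⟩, rfl⟩
        fin_cases i
        · simpa [swf] using const_mem hn c
        · simpa [swf] using aut_mem hn (add_aut c)
        · simpa [swf] using aut_mem hn (sub_aut c)
    have hinj : Function.Injective (swf n) := by
      rintro ⟨i, c⟩ ⟨j, c'⟩ hEq
      have h0 := congrFun hEq 0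
      have h1' := congrFun hEq 1
      fin_cases i <;> fin_cases j <;>
        norm_num [swf, Function.const] at h0 h1' ⊢
      · exact h0
      · exact absurd (show (1 : ZMod n) = 0 by linear_combination h0 - h1') (one_ne hn)
      · exact absurd (show (1 : ZMod n) = 0 by linear_combination h1' - h0) (one_ne hn)
      · exact absurd (show (1 : ZMod n) = 0 by linear_combination h1' - h0) (one_ne hn)
      · exact h0
      · exact absurd (show (2 : ZMod n) = 0 by linear_combination h1' - h0) (two_ne hn)
      · exact absurd (show (1 : ZMod n) = 0 by linear_combination h0 - h1') (one_ne hn)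
      · exact absurd (show (2 : ZMod n) = 0 by linear_combination h0 - h1') (two_ne hn)
      · exact h0
    rw [hrange, Nat.card_range_of_injective hinj, Nat.card_prod, Nat.card_zmod]
    simp
end

section
/- For even n ≥ 4, the number of endomorphisms of the cycle graph C_n is 2n + n·C(n, n/2), where C(n, n/2) is the central binomial coefficient. -/
/-- `α` is an endomorphism of the cycle graph `C_n` on `ZMod n`:
consecutive vertices have images differing by `1` or `-1` (i.e. `n-1`) mod `n`. -/
def IsEndCycle (n : ℕ) (α : ZMod n → ZMod n) : Prop :=
  ∀ i : ZMod n, α (i + 1) - α i ∈ ({1, -1} : Set (ZMod n))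

section CycleAux

variable {n : ℕ} [NeZero n]

open Fin.NatCast

private def gsum (ε : Fin n → ZMod n) (k : ℕ) : ZMod n :=
  ∑ i ∈ Finset.range k, ε (i : Fin n)

private lemma gsum_zero (ε : Fin n → ZMod n) : gsum ε 0 = 0 := by
  simp [gsum]

private lemma gsum_succ (ε : Fin n → ZMod n) (k : ℕ) :
    gsum ε (k + 1) = gsum ε k + ε (k : Fin n) :=
  Finset.sum_range_succ _ _

private lemma gsum_n (ε : Fin n → ZMod n) : gsum ε n = ∑ i, ε i := by
  rw [gsum, Finset.sum_range]
  simp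

private def buildA (c : ZMod n) (ε : Fin n → ZMod n) : ZMod n → ZMod n :=
  fun j => c + gsum ε (ZMod.val j)

private lemma buildA_diff (c : ZMod n) (ε : Fin n → ZMod n) (hsum : ∑ i, ε i = 0)
    {k : ℕ} (hk : k < n) :
    buildA c ε ((k + 1 : ℕ) : ZMod n) - buildA c ε ((k : ℕ) : ZMod n) = ε (k : Fin n) := by
  have hvk : (ZMod.val ((k : ℕ) : ZMod n)) = k := ZMod.val_natCast_of_lt hk
  rcases lt_or_eq_of_le (Nat.succ_le_of_lt hk) with h | h
  · have hv1 : (ZMod.val ((k + 1 : ℕ) : ZMod n)) = k + 1 := ZMod.val_natCast_of_lt h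
    simp only [buildA, hv1, hvk, gsum_succ]
    ring
  · have hv1 : (ZMod.val ((k + 1 : ℕ) : ZMod n)) = 0 := by
      rw [ZMod.val_natCast, show k + 1 = n from h, Nat.mod_self]
    have h0 : gsum ε (k + 1) = 0 := by rw [show k + 1 = n from h, gsum_n, hsum]
    have hstep := gsum_succ ε k
    rw [h0] at hstep
    simp only [buildA, hv1, hvk, gsum_zero]
    linear_combination hstep

private lemma buildA_isEnd (c : ZMod n) (ε : Fin n → ZMod n)
    (hε : ∀ i, ε i = 1 ∨ ε i = -1) (hsum : ∑ i, ε i = 0) :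
    IsEndCycle n (buildA c ε) := by
  intro j
  have hk : ZMod.val j < n := ZMod.val_lt j
  have hj : ((ZMod.val j : ℕ) : ZMod n) = j := ZMod.natCast_zmod_val j
  have key : buildA c ε (j + 1) - buildA c ε j = ε ((ZMod.val j : ℕ) : Fin n) := by
    conv_lhs => rw [← hj, ← Nat.cast_one (R := ZMod n), ← Nat.cast_add]
    exact buildA_diff c ε hsum hk
  simp only [Set.mem_insert_iff, Set.mem_singleton_iff, key]
  exact hε _

private def epsOf (α : ZMod n → ZMod n) : Fin n → ZMod n :=
  fun i => α (((i : ℕ) : ZMod n) + 1) - α ((i : ℕ) : ZMod n)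

private lemma epsOf_eq (α : ZMod n → ZMod n) (i : Fin n) :
    epsOf α i = α (((i : ℕ) + 1 : ℕ) : ZMod n) - α ((i : ℕ) : ZMod n) := by
  rw [epsOf, Nat.cast_add, Nat.cast_one]

private lemma epsOf_mem (α : ZMod n → ZMod n) (hα : IsEndCycle n α) (i : Fin n) :
    epsOf α i = 1 ∨ epsOf α i = -1 := by
  have := hα ((i : ℕ) : ZMod n)
  simpa [epsOf, Set.mem_insert_iff] using this

private lemma epsOf_sum (α : ZMod n → ZMod n) : ∑ i, epsOf α i = 0 := by
  have h : ∑ i : Fin n, epsOf α i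
      = ∑ k ∈ Finset.range n, (α (((k + 1 : ℕ)) : ZMod n) - α ((k : ℕ) : ZMod n)) := by
    rw [Finset.sum_range]
    exact Finset.sum_congr rfl fun i _ => epsOf_eq α i
  rw [h, Finset.sum_range_sub (fun k => α ((k : ℕ) : ZMod n))]
  simp [ZMod.natCast_self]

private def endEquiv :
    {α : ZMod n → ZMod n // IsEndCycle n α} ≃
      ZMod n × {ε : Fin n → ZMod n // (∀ i, ε i = 1 ∨ ε i = -1) ∧ ∑ i, ε i = 0} where
  toFun a := (a.1 0, ⟨epsOf a.1, fun i => epsOf_mem a.1 a.2 i, epsOf_sum a.1⟩)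
  invFun p := ⟨buildA p.1 p.2.1, buildA_isEnd p.1 p.2.1 p.2.2.1 p.2.2.2⟩
  left_inv := by
    rintro ⟨α, hα⟩
    apply Subtype.ext
    funext j
    show buildA (α 0) (epsOf α) j = α j
    have hg : gsum (epsOf α) (ZMod.val j)
        = α ((ZMod.val j : ℕ) : ZMod n) - α ((0 : ℕ) : ZMod n) := by
      rw [gsum,
        show ∑ i ∈ Finset.range (ZMod.val j), epsOf α (i : Fin n)
            = ∑ i ∈ Finset.range (ZMod.val j),
              (α (((i + 1 : ℕ)) : ZMod n) - α ((i : ℕ) : ZMod n)) from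
          Finset.sum_congr rfl fun i hi => by
            have hi' : i < n := (Finset.mem_range.mp hi).trans (ZMod.val_lt j)
            rw [epsOf_eq, Fin.val_cast_of_lt hi']]
      exact Finset.sum_range_sub (fun k => α ((k : ℕ) : ZMod n)) (ZMod.val j)
    rw [buildA, hg, ZMod.natCast_zmod_val]
    simp only [Nat.cast_zero]
    ring
  right_inv := by
    rintro ⟨c, ε, hε, hsum⟩
    have h1 : buildA c ε 0 = c := by
      rw [buildA, ZMod.val_zero, gsum_zero, add_zero]
    have h2 : epsOf (buildA c ε) = ε := by
      funext i
      rw [epsOf_eq, buildA_diff c ε hsum i.isLt, Fin.cast_val_eq_self]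
    exact Prod.ext h1 (Subtype.ext h2)

private lemma one_ne_negone (hn : 2 < n) : (1 : ZMod n) ≠ -1 := by
  intro h
  have h2 : ((2 : ℕ) : ZMod n) = 0 := by push_cast; linear_combination h
  rw [ZMod.natCast_eq_zero_iff] at h2
  have := Nat.le_of_dvd (by norm_num) h2
  omega

private lemma sum_ite_eq (S : Finset (Fin n)) :
    ∑ i : Fin n, (if i ∈ S then (1 : ZMod n) else -1) = ((2 * S.card : ℕ) : ZMod n) := by
  classical
  rw [Finset.sum_ite, Finset.sum_const, Finset.sum_const]
  have h1 : Finset.univ.filter (· ∈ S) = S := Finset.filter_univ_mem S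
  have h2 : Finset.univ.filter (fun i => ¬ i ∈ S) = Sᶜ := by
    ext i; simp
  rw [h1, h2, Finset.card_compl, Fintype.card_fin]
  have hle : S.card ≤ n := by
    have := Finset.card_le_univ S
    simpa using this
  rw [nsmul_eq_mul, nsmul_eq_mul, Nat.cast_sub hle, ZMod.natCast_self]
  push_cast
  ring

private lemma card_cond (hn : 4 ≤ n) (hev : Even n) (S : Finset (Fin n)) :
    (∑ i : Fin n, (if i ∈ S then (1 : ZMod n) else -1)) = 0 ↔
      (S.card = 0 ∨ S.card = n / 2 ∨ S.card = n) := by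
  rw [sum_ite_eq, ZMod.natCast_eq_zero_iff]
  have hle : S.card ≤ n := by
    have := Finset.card_le_univ S
    simpa using this
  obtain ⟨m, hm⟩ := hev
  constructor
  · rintro ⟨t, ht⟩
    have ht2 : t ≤ 2 := by
      by_contra hc
      push_neg at hc
      have h3 : n * 3 ≤ n * t := Nat.mul_le_mul_left n hc
      omega
    interval_cases t <;> omega
  · rintro (h | h | h)
    · exact ⟨0, by omega⟩
    · exact ⟨1, by omega⟩
    · exact ⟨2, by omega⟩

private def stepEquiv (hn : 4 ≤ n) (hev : Even n) :
    {ε : Fin n → ZMod n // (∀ i, ε i = 1 ∨ ε i = -1) ∧ ∑ i, ε i = 0} ≃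
      {S : Finset (Fin n) // S.card = 0 ∨ S.card = n / 2 ∨ S.card = n} where
  toFun e := ⟨Finset.univ.filter (fun i => e.1 i = 1), by
    obtain ⟨ε, hε, hsum⟩ := e
    apply (card_cond hn hev _).mp
    have hfun : ∀ i : Fin n,
        (if i ∈ Finset.univ.filter (fun i => ε i = 1) then (1 : ZMod n) else -1) = ε i := by
      intro i
      by_cases h : ε i = 1
      · simp [h]
      · have h' : ε i = -1 := (hε i).resolve_left h
        simp only [Finset.mem_filter, Finset.mem_univ, true_and, h, if_false, h']
        exact if_neg fun hc => one_ne_negone (by omega) hc.symm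
    rw [Finset.sum_congr rfl fun i _ => hfun i]
    exact hsum⟩
  invFun S := ⟨fun i => if i ∈ S.1 then 1 else -1,
    fun i => by by_cases h : i ∈ S.1 <;> simp [h],
    (card_cond hn hev S.1).mpr S.2⟩
  left_inv := by
    rintro ⟨ε, hε, hsum⟩
    apply Subtype.ext
    funext i
    show (if i ∈ Finset.univ.filter (fun i => ε i = 1) then (1 : ZMod n) else -1) = ε i
    by_cases h : ε i = 1
    · simp [h]
    · have h' : ε i = -1 := (hε i).resolve_left h
      simp only [Finset.mem_filter, Finset.mem_univ, true_and, h, if_false, h']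
      exact if_neg fun hc => one_ne_negone (by omega) hc.symm
  right_inv := by
    rintro ⟨S, hS⟩
    apply Subtype.ext
    show Finset.univ.filter (fun i => (if i ∈ S then (1 : ZMod n) else -1) = 1) = S
    ext i
    by_cases h : i ∈ S
    · simp [h]
    · simp only [Finset.mem_filter, Finset.mem_univ, true_and, if_neg h, h, iff_false]
      intro hc
      exact one_ne_negone (by omega) hc.symm

end CycleAux

/-- For even `n ≥ 4`, `|End(C_n)| = 2n + n·C(n, n/2)`. -/
theorem card_end_cycle_even (n : ℕ) (hn : 4 ≤ n) (heven : Even n) :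
    Nat.card {α : ZMod n → ZMod n | IsEndCycle n α} =
      2 * n + n * Nat.choose n (n / 2) := by
  haveI : NeZero n := ⟨by omega⟩
  have E : {α : ZMod n → ZMod n | IsEndCycle n α} ≃
      ZMod n × {S : Finset (Fin n) // S.card = 0 ∨ S.card = n / 2 ∨ S.card = n} :=
    endEquiv.trans (Equiv.prodCongr (Equiv.refl _) (stepEquiv hn heven))
  rw [Nat.card_congr E, Nat.card_prod, Nat.card_zmod]
  have hsub : Nat.card {S : Finset (Fin n) // S.card = 0 ∨ S.card = n / 2 ∨ S.card = n}
      = 2 + Nat.choose n (n / 2) := by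
    classical
    rw [Nat.card_eq_fintype_card, Fintype.card_subtype]
    rw [Finset.filter_or, Finset.filter_or]
    have d1 : Disjoint
        (Finset.univ.filter (fun S : Finset (Fin n) => S.card = n / 2))
        (Finset.univ.filter (fun S : Finset (Fin n) => S.card = n)) := by
      rw [Finset.disjoint_left]
      intro S h1 h2
      simp only [Finset.mem_filter] at h1 h2
      omega
    have d2 : Disjoint
        (Finset.univ.filter (fun S : Finset (Fin n) => S.card = 0))
        ((Finset.univ.filter (fun S : Finset (Fin n) => S.card = n / 2)) ∪
          (Finset.univ.filter (fun S : Finset (Fin n) => S.card = n))) := by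
      rw [Finset.disjoint_left]
      intro S h1 h2
      simp only [Finset.mem_filter, Finset.mem_union] at h1 h2
      omega
    rw [Finset.card_union_of_disjoint d2, Finset.card_union_of_disjoint d1]
    have hc : ∀ k, (Finset.univ.filter (fun S : Finset (Fin n) => S.card = k)).card
        = Nat.choose n k := by
      intro k
      rw [← Fintype.card_subtype, Fintype.card_finset_len, Fintype.card_fin]
    rw [hc 0, hc (n / 2), hc n, Nat.choose_zero_right, Nat.choose_self]
    omega
  rw [hsub]
  ring
end

section
/- For n ≥ 3, the number of weak endomorphisms of the cycle graph C_n is 3n + 2n·∑_{k=1}^{⌊n/2⌋} C(2k-1, k)·C(n, 2k). -/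
open Finset

lemma zmod_sum_range {n : ℕ} [NeZero n] (f : ZMod n → ZMod n) :
    ∑ i : ZMod n, f i = ∑ j ∈ Finset.range n, f (j : ZMod n) :=
  Finset.sum_nbij' (fun i => i.val) (fun j => (j : ZMod n))
    (fun i _ => Finset.mem_range.2 (ZMod.val_lt i))
    (fun j _ => Finset.mem_univ _)
    (fun i _ => by simp [ZMod.natCast_val, ZMod.cast_id])
    (fun j hj => ZMod.val_cast_of_lt (Finset.mem_range.1 hj))
    (fun i _ => by simp [ZMod.natCast_val, ZMod.cast_id])

lemma telescope {n : ℕ} [NeZero n] (α : ZMod n → ZMod n) (k : ℕ) :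
    α (k : ZMod n) = α 0 + ∑ j ∈ range k, (α ((j:ZMod n) + 1) - α (j:ZMod n)) := by
  induction k with
  | zero => simp
  | succ k ih =>
    rw [Finset.sum_range_succ]
    push_cast
    linear_combination ih

lemma prefix_diff {n : ℕ} [NeZero n] (hn : 2 ≤ n) (f : ZMod n → ZMod n)
    (hsum : ∑ j ∈ range n, f (j : ZMod n) = 0) (i : ZMod n) :
    ∑ j ∈ range (i+1).val, f (j : ZMod n) = (∑ j ∈ range i.val, f (j : ZMod n)) + f i := by
  haveI : Fact (1 < n) := ⟨by omega⟩
  have hvlt : i.val < n := ZMod.val_lt i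
  have hvc : ((i.val : ℕ) : ZMod n) = i := by simp [ZMod.natCast_val, ZMod.cast_id]
  have h1 : (i+1).val = (i.val + 1) % n := by
    rw [ZMod.val_add, ZMod.val_one]
  rcases lt_or_eq_of_le (Nat.succ_le_of_lt hvlt) with h | h
  · rw [h1, Nat.mod_eq_of_lt h, Finset.sum_range_succ, hvc]
  · have h2 : (i+1).val = 0 := by
      rw [h1, Nat.succ_eq_add_one] at *; rw [h]; exact Nat.mod_self n
    have hr : range n = range (i.val + 1) := congrArg _ h.symm
    rw [hr, Finset.sum_range_succ, hvc] at hsum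
    rw [h2]
    simp only [Finset.range_zero, Finset.sum_empty]
    exact hsum.symm

section main
variable {n : ℕ} (hn : 3 ≤ n)

/-- the step function associated to a pair of finsets -/
def gfun (n : ℕ) (AB : Finset (ZMod n) × Finset (ZMod n)) (i : ZMod n) : ZMod n :=
  (if i ∈ AB.1 then 1 else 0) - (if i ∈ AB.2 then 1 else 0)

abbrev DCond (n : ℕ) (AB : Finset (ZMod n) × Finset (ZMod n)) : Prop :=
  Disjoint AB.1 AB.2 ∧ ((AB.1.card : ZMod n) = (AB.2.card : ZMod n))

lemma neZero_of (hn : 3 ≤ n) : NeZero n := ⟨by omega⟩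

lemma gsum_s13 (hn : 3 ≤ n) (AB : Finset (ZMod n) × Finset (ZMod n)) :
    haveI : NeZero n := neZero_of hn
    ∑ j ∈ range n, gfun n AB (j : ZMod n)
      = (AB.1.card : ZMod n) - (AB.2.card : ZMod n) := by
  haveI : NeZero n := neZero_of hn
  rw [← zmod_sum_range]
  unfold gfun
  rw [Finset.sum_sub_distrib]
  simp [Finset.sum_boole, Finset.filter_mem_eq_inter]

lemma distinct1 (hn : 3 ≤ n) : (1 : ZMod n) ≠ 0 := by
  haveI : Fact (1 < n) := ⟨by omega⟩
  exact one_ne_zero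

lemma distinct2 (hn : 3 ≤ n) : (-1 : ZMod n) ≠ 0 := by
  haveI : Fact (1 < n) := ⟨by omega⟩
  exact neg_ne_zero.2 one_ne_zero

lemma distinct3 (hn : 3 ≤ n) : (-1 : ZMod n) ≠ 1 := by
  intro h
  have h2 : ((2 : ℕ) : ZMod n) = 0 := by push_cast; linear_combination -h
  rw [ZMod.natCast_eq_zero_iff] at h2
  have := Nat.le_of_dvd (by norm_num) h2
  omega

def recFun (n : ℕ) [NeZero n] (a : ZMod n) (AB : Finset (ZMod n) × Finset (ZMod n)) :
    ZMod n → ZMod n :=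
  fun i => a + ∑ j ∈ range i.val, gfun n AB (j : ZMod n)

lemma recFun_diff (hn : 3 ≤ n) (a : ZMod n) (AB : Finset (ZMod n) × Finset (ZMod n))
    (hAB : DCond n AB) (i : ZMod n) :
    haveI : NeZero n := neZero_of hn
    recFun n a AB (i + 1) - recFun n a AB i = gfun n AB i := by
  haveI : NeZero n := neZero_of hn
  unfold recFun
  have := prefix_diff (n := n) (by omega) (gfun n AB)
    (by rw [gsum_s13 hn AB, hAB.2, sub_self]) i
  rw [this]; ring

lemma recFun_isWeakEnd (hn : 3 ≤ n) (a : ZMod n) (AB : Finset (ZMod n) × Finset (ZMod n))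
    (hAB : DCond n AB) :
    haveI : NeZero n := neZero_of hn
    IsWeakEndCycle n (recFun n a AB) := by
  haveI : NeZero n := neZero_of hn
  intro i
  rw [recFun_diff hn a AB hAB i]
  unfold gfun
  by_cases h1 : i ∈ AB.1 <;> by_cases h2 : i ∈ AB.2 <;> simp [h1, h2]

lemma gfun_eq_one_iff (h1 : (1:ZMod n) ≠ 0) (h3 : (-1:ZMod n) ≠ 1) (AB : Finset (ZMod n) × Finset (ZMod n))
    (hd : Disjoint AB.1 AB.2) (i : ZMod n) : gfun n AB i = 1 ↔ i ∈ AB.1 := by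
  by_cases m1 : i ∈ AB.1 <;> by_cases m2 : i ∈ AB.2
  · exact absurd (Finset.disjoint_left.1 hd m1 m2) (by simp)
  · simp [gfun, m1, m2]
  · simp [gfun, m1, m2, h3]
  · simp [gfun, m1, m2, h1.symm]

lemma gfun_eq_negone_iff (h2 : (-1:ZMod n) ≠ 0) (h3 : (-1:ZMod n) ≠ 1) (AB : Finset (ZMod n) × Finset (ZMod n))
    (hd : Disjoint AB.1 AB.2) (i : ZMod n) : gfun n AB i = -1 ↔ i ∈ AB.2 := by
  by_cases m1 : i ∈ AB.1 <;> by_cases m2 : i ∈ AB.2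
  · exact absurd (Finset.disjoint_left.1 hd m1 m2) (by simp)
  · simp only [gfun, if_pos m1, if_neg m2, sub_zero]
    constructor
    · intro h; exact absurd h.symm h3
    · intro h; exact absurd h m2
  · simp [gfun, m1, m2]
  · simp [gfun, m1, m2, h2.symm]


lemma card_weakEnd (hn : 3 ≤ n) :
    Nat.card {α : ZMod n → ZMod n | IsWeakEndCycle n α} =
      n * Nat.card {AB : Finset (ZMod n) × Finset (ZMod n) // DCond n AB} := by
  haveI : NeZero n := neZero_of hn
  have key : Nat.card {α : ZMod n → ZMod n | IsWeakEndCycle n α} =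
      Nat.card (ZMod n × {AB : Finset (ZMod n) × Finset (ZMod n) // DCond n AB}) := by
    refine (Nat.card_eq_of_bijective
      (fun p : ZMod n × {AB // DCond n AB} =>
        (⟨recFun n p.1 p.2.1, recFun_isWeakEnd hn p.1 p.2.1 p.2.2⟩ :
          {α : ZMod n → ZMod n | IsWeakEndCycle n α})) ⟨?_, ?_⟩).symm
    · rintro ⟨a, ⟨AB, hAB⟩⟩ ⟨a', ⟨AB', hAB'⟩⟩ h
      have hf : recFun n a AB = recFun n a' AB' := congrArg Subtype.val h
      have ha : a = a' := by
        have := congrFun hf 0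
        simpa [recFun, ZMod.val_zero] using this
      have hg : ∀ i, gfun n AB i = gfun n AB' i := by
        intro i
        rw [← recFun_diff hn a AB hAB i, ← recFun_diff hn a' AB' hAB' i, hf]
      have hA : AB.1 = AB'.1 := by
        ext i
        rw [← gfun_eq_one_iff (distinct1 hn) (distinct3 hn) AB hAB.1 i,
          ← gfun_eq_one_iff (distinct1 hn) (distinct3 hn) AB' hAB'.1 i, hg]
      have hB : AB.2 = AB'.2 := by
        ext i
        rw [← gfun_eq_negone_iff (distinct2 hn) (distinct3 hn) AB hAB.1 i,
          ← gfun_eq_negone_iff (distinct2 hn) (distinct3 hn) AB' hAB'.1 i, hg]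
      simp only [Prod.mk.injEq, Subtype.mk.injEq, ha, Prod.ext_iff, hA, hB, and_self]
    · rintro ⟨α, hα⟩
      set A := univ.filter (fun i => α (i+1) - α i = 1) with hA
      set B := univ.filter (fun i => α (i+1) - α i = -1) with hB
      have hdisj : Disjoint A B := by
        rw [Finset.disjoint_left]
        intro i hiA hiB
        rw [hA, Finset.mem_filter] at hiA
        rw [hB, Finset.mem_filter] at hiB
        exact distinct3 hn (hiA.2.symm.trans hiB.2).symm
      have hg : ∀ i, gfun n (A, B) i = α (i+1) - α i := by
        intro i
        have hmem := hα i
        simp only [Set.mem_insert_iff, Set.mem_singleton_iff] at hmem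
        rcases hmem with h | h | h
        · have m1 : i ∉ A := by simp [hA, h, (distinct1 hn).symm]
          have m2 : i ∉ B := by simp [hB, h, (distinct2 hn).symm]
          simp [gfun, m1, m2, h]
        · have m1 : i ∈ A := by simp [hA, h]
          have m2 : i ∉ B := by simp [hB, h]; exact fun hh => distinct3 hn hh.symm
          simp [gfun, m1, m2, h]
        · have m1 : i ∉ A := by simp [hA, h, distinct3 hn]
          have m2 : i ∈ B := by simp [hB, h]
          simp [gfun, m1, m2, h]
      have hcard : ((A.card : ZMod n)) = (B.card : ZMod n) := by
        have hs : ∑ i : ZMod n, gfun n (A, B) i = 0 := by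
          have : ∑ i : ZMod n, (α (i+1) - α i) = 0 := by
            rw [Finset.sum_sub_distrib]
            rw [sub_eq_zero]
            exact Equiv.sum_comp (Equiv.addRight (1 : ZMod n)) α
          rw [← this]
          exact Finset.sum_congr rfl (fun i _ => hg i)
        rw [zmod_sum_range, gsum_s13 hn (A, B)] at hs
        exact sub_eq_zero.1 hs
      refine ⟨(α 0, ⟨(A, B), ⟨hdisj, hcard⟩⟩), ?_⟩
      apply Subtype.ext
      funext i
      show recFun n (α 0) (A, B) i = α i
      have hvc : ((i.val : ℕ) : ZMod n) = i := by simp [ZMod.natCast_val, ZMod.cast_id]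
      rw [recFun]
      calc α 0 + ∑ j ∈ range i.val, gfun n (A, B) (j : ZMod n)
          = α 0 + ∑ j ∈ range i.val, (α ((j : ZMod n) + 1) - α (j : ZMod n)) :=
            by rw [Finset.sum_congr rfl (fun j _ => hg _)]
        _ = α ((i.val : ℕ) : ZMod n) := (telescope α i.val).symm
        _ = α i := by rw [hvc]
  rw [key, Nat.card_prod, Nat.card_zmod]

lemma modeq_cases {a b n : ℕ} (h : a ≡ b [MOD n]) (hab : a + b ≤ n) :
    a = b ∨ (a = n ∧ b = 0) ∨ (a = 0 ∧ b = n) := by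
  have hd : (n:ℤ) ∣ (b : ℤ) - a := (Nat.modEq_iff_dvd).1 h
  rcases eq_or_ne ((b:ℤ) - a) 0 with h0 | h0
  · left; omega
  · have h1 : (n:ℤ) ≤ |(b:ℤ) - a| := Int.le_of_dvd (abs_pos.2 h0) ((dvd_abs _ _).2 hd)
    have h2 : |(b:ℤ) - a| ≤ n := by rw [abs_le]; omega
    have h3 : |(b:ℤ) - a| = n := le_antisymm h2 h1
    rw [abs_eq (by positivity)] at h3
    omega

lemma card_disj_pairs_k {n : ℕ} [NeZero n] (k : ℕ) :
    ((univ : Finset (Finset (ZMod n) × Finset (ZMod n))).filter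
      (fun AB => Disjoint AB.1 AB.2 ∧ AB.1.card = k ∧ AB.2.card = k)).card
      = n.choose (2*k) * (2*k).choose k := by
  rw [Finset.card_bij' (fun AB _ => (⟨AB.1 ∪ AB.2, AB.1⟩ : Σ _ : Finset (ZMod n), Finset (ZMod n)))
    (fun CA _ => (CA.2, CA.1 \ CA.2))
    (s := _) (t := ((univ : Finset (ZMod n)).powersetCard (2*k)).sigma
      (fun C => C.powersetCard k)) ?_ ?_ ?_ ?_]
  · rw [Finset.card_sigma]
    rw [Finset.sum_congr rfl (fun C hC => by
      rw [Finset.card_powersetCard, (Finset.mem_powersetCard.1 hC).2])]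
    rw [Finset.sum_const, Finset.card_powersetCard, Finset.card_univ, ZMod.card, smul_eq_mul]
  · rintro ⟨A, B⟩ h
    rw [Finset.mem_filter] at h
    obtain ⟨-, hd, hA, hB⟩ := h
    rw [Finset.mem_sigma, Finset.mem_powersetCard, Finset.mem_powersetCard]
    refine ⟨⟨Finset.subset_univ _, ?_⟩, Finset.subset_union_left, hA⟩
    rw [Finset.card_union_of_disjoint hd, hA, hB]; ring
  · rintro ⟨C, A⟩ h
    rw [Finset.mem_sigma, Finset.mem_powersetCard, Finset.mem_powersetCard] at h
    obtain ⟨⟨-, hC⟩, hAC, hA⟩ := h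
    rw [Finset.mem_filter]
    refine ⟨Finset.mem_univ _, Finset.disjoint_sdiff, hA, ?_⟩
    rw [Finset.card_sdiff_of_subset hAC, hC, hA]; omega
  · rintro ⟨A, B⟩ h
    rw [Finset.mem_filter] at h
    simp [Finset.union_sdiff_cancel_left h.2.1]
  · rintro ⟨C, A⟩ h
    rw [Finset.mem_sigma, Finset.mem_powersetCard, Finset.mem_powersetCard] at h
    simp [Finset.union_sdiff_of_subset h.2.1]

lemma sum_range_succ_Icc {m : ℕ} (f : ℕ → ℕ) :
    ∑ k ∈ range (m+1), f k = f 0 + ∑ k ∈ Icc 1 m, f k := by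
  induction m with
  | zero => simp
  | succ m ih =>
      rw [Finset.sum_range_succ, ih, Finset.sum_Icc_succ_top (by omega)]
      ring

lemma card_DCond {n : ℕ} (hn : 3 ≤ n) :
    haveI : NeZero n := ⟨by omega⟩
    Nat.card {AB : Finset (ZMod n) × Finset (ZMod n) // DCond n AB}
      = 3 + ∑ k ∈ Icc 1 (n/2), (2*k).choose k * n.choose (2*k) := by
  haveI : NeZero n := ⟨by omega⟩
  classical
  rw [Nat.card_eq_fintype_card, Fintype.card_subtype]
  have hun : (univ : Finset (ZMod n)).card = n := by rw [Finset.card_univ, ZMod.card]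
  have hcard_le : ∀ A B : Finset (ZMod n), Disjoint A B → A.card + B.card ≤ n := by
    intro A B hd
    rw [← Finset.card_union_of_disjoint hd]
    exact le_trans (Finset.card_le_univ _) (le_of_eq hun)
  have hsplit : filter (fun AB => DCond n AB) univ
      = filter (fun AB => Disjoint AB.1 AB.2 ∧ AB.1.card = AB.2.card) univ
        ∪ {((univ : Finset (ZMod n)), (∅ : Finset (ZMod n))), ((∅ : Finset (ZMod n)), univ)} := by
    ext ⟨A, B⟩
    simp only [DCond, mem_filter, mem_union, mem_insert, mem_singleton, mem_univ, true_and,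
      Prod.mk.injEq]
    constructor
    · rintro ⟨hd, hc⟩
      rcases modeq_cases ((ZMod.natCast_eq_natCast_iff _ _ _).1 hc) (hcard_le A B hd) with
        h | ⟨h1, h2⟩ | ⟨h1, h2⟩
      · exact Or.inl ⟨hd, h⟩
      · refine Or.inr (Or.inl ⟨?_, Finset.card_eq_zero.1 h2⟩)
        apply Finset.eq_univ_of_card; rw [h1]; exact (ZMod.card n).symm
      · refine Or.inr (Or.inr ⟨Finset.card_eq_zero.1 h1, ?_⟩)
        apply Finset.eq_univ_of_card; rw [h2]; exact (ZMod.card n).symm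
    · rintro (⟨hd, hc⟩ | ⟨h1, h2⟩ | ⟨h1, h2⟩)
      · exact ⟨hd, by rw [hc]⟩
      · subst h1; subst h2; simp [hun, ZMod.natCast_self]
      · subst h1; subst h2; simp [hun, ZMod.natCast_self]
  rw [hsplit, Finset.card_union_of_disjoint ?hdisj2]
  case hdisj2 =>
    rw [Finset.disjoint_right]
    intro AB hAB hmem
    rw [Finset.mem_insert, Finset.mem_singleton] at hAB
    rw [Finset.mem_filter] at hmem
    rcases hAB with h | h <;> rw [h] at hmem <;>
      · have := hmem.2.2
        simp only [hun, Finset.card_empty] at this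
        omega
  have hpair : ({((univ : Finset (ZMod n)), (∅ : Finset (ZMod n))),
      ((∅ : Finset (ZMod n)), univ)} : Finset (Finset (ZMod n) × Finset (ZMod n))).card = 2 := by
    rw [Finset.card_insert_of_notMem, Finset.card_singleton]
    rw [Finset.mem_singleton]
    intro h
    have : (univ : Finset (ZMod n)) = ∅ := congrArg Prod.fst h
    exact Finset.univ_nonempty.ne_empty this
  rw [hpair]
  have hbi : filter (fun AB : Finset (ZMod n) × Finset (ZMod n) =>
        Disjoint AB.1 AB.2 ∧ AB.1.card = AB.2.card) univ
      = (range (n/2+1)).biUnion (fun k => filter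
          (fun AB => Disjoint AB.1 AB.2 ∧ AB.1.card = k ∧ AB.2.card = k) univ) := by
    ext ⟨A, B⟩
    simp only [mem_filter, mem_biUnion, mem_range, mem_univ, true_and]
    constructor
    · rintro ⟨hd, hc⟩
      refine ⟨A.card, ?_, hd, rfl, hc.symm⟩
      have := hcard_le A B hd
      omega
    · rintro ⟨k, -, hd, h1, h2⟩
      exact ⟨hd, h1.trans h2.symm⟩
  rw [hbi, Finset.card_biUnion]
  · rw [Finset.sum_congr rfl (fun k _ => card_disj_pairs_k k), sum_range_succ_Icc]
    simp only [Nat.mul_zero, Nat.choose_zero_right, Nat.choose_self, Nat.mul_one]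
    rw [Finset.sum_congr rfl (fun k _ => mul_comm (n.choose (2*k)) ((2*k).choose k))]
    omega
  · intro x hx y hy hxy
    rw [Function.onFun, Finset.disjoint_left]
    intro AB h1 h2
    rw [Finset.mem_filter] at h1 h2
    exact hxy (h1.2.2.1.symm.trans h2.2.2.1)


lemma central_choose (k : ℕ) (hk : 1 ≤ k) : (2*k).choose k = 2 * ((2*k-1).choose k) := by
  obtain ⟨j, rfl⟩ : ∃ j, k = j + 1 := ⟨k-1, by omega⟩
  have h1 : 2*(j+1) = (2*j+1) + 1 := by ring
  rw [h1, Nat.choose_succ_succ]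
  have h2 : (2*j+1).choose j = (2*j+1).choose (j+1) := by
    have := Nat.choose_symm (n := 2*j+1) (k := j+1) (by omega)
    simpa [show 2*j+1 - (j+1) = j by omega] using this
  rw [h2, show 2*j+1+1-1 = 2*j+1 from by omega, Nat.succ_eq_add_one]
  ring

/-- For `n ≥ 3`, `|wEnd(C_n)| = 3n + 2n·∑_{k=1}^{⌊n/2⌋} C(2k-1,k)·C(n,2k)`. -/
theorem card_wEnd_cycle (n : ℕ) (hn : 3 ≤ n) :
    Nat.card {α : ZMod n → ZMod n | IsWeakEndCycle n α} =
      3 * n + 2 * n * ∑ k ∈ Finset.Icc 1 (n / 2),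
        Nat.choose (2 * k - 1) k * Nat.choose n (2 * k) := by
  rw [card_weakEnd hn, card_DCond hn]
  have hs : ∑ k ∈ Icc 1 (n/2), (2*k).choose k * n.choose (2*k)
      = 2 * ∑ k ∈ Icc 1 (n/2), (2*k-1).choose k * n.choose (2*k) := by
    rw [Finset.mul_sum]
    exact Finset.sum_congr rfl fun k hk => by
      rw [central_choose k (Finset.mem_Icc.1 hk).1]; ring
  rw [hs]; ring

end main
end

section
/- Let α be a weak endomorphism of the cycle graph C_n. Then α is a regular element of the monoid wEnd(C_n) (i.e. there exists β ∈ wEnd(C_n) with α = αβα) if and only if α has a full sublist of consecutive images: there exist 1 ≤ i ≤ n and u ∈ {-1, 1} such that α(i+t) = α(i) + t·u for all 0 ≤ t ≤ rank(α) - 1 (indices and values mod n). -/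
/-- `α` has a full sublist of consecutive images: for `k = rank α`, there are a vertex `i`
and a direction `u ∈ {1, -1}` with `α (i + t) = α i + t·u` for all `0 ≤ t ≤ k - 1`. -/
def HasFullSublist (n : ℕ) (α : ZMod n → ZMod n) : Prop :=
  ∃ (i u : ZMod n), (u = 1 ∨ u = -1) ∧
    ∀ t : ℕ, t < (Set.range α).ncard → α (i + (t : ZMod n)) = α i + (t : ZMod n) * u


lemma castInj {n : ℕ} {t₁ t₂ : ℕ} (h₁ : t₁ < n) (h₂ : t₂ < n)
    (h : (t₁ : ZMod n) = t₂) : t₁ = t₂ := by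
  have := congrArg ZMod.val h
  rwa [ZMod.val_cast_of_lt h₁, ZMod.val_cast_of_lt h₂] at this

lemma ivtZ (f : ℕ → ℤ) (hf : ∀ m, |f (m+1) - f m| ≤ 1) :
    ∀ p q w, p ≤ q → f p ≤ w → w ≤ f q → ∃ m, f m = w := by
  intro p q w hpq
  induction q, hpq using Nat.le_induction with
  | base => intro h1 h2; exact ⟨p, le_antisymm h1 h2⟩
  | succ q hq ih =>
    intro h1 h2
    by_cases hw : w ≤ f q
    · exact ih h1 hw
    · have := abs_le.mp (hf q)
      exact ⟨q + 1, by omega⟩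

lemma myRankLe {n : ℕ} [NeZero n] (α : ZMod n → ZMod n) : (Set.range α).ncard ≤ n := by
  have h := Set.ncard_le_ncard (Set.subset_univ (Set.range α)) Set.finite_univ
  rwa [Set.ncard_univ, Nat.card_eq_fintype_card, ZMod.card] at h

lemma ncard_arc {n : ℕ} [NeZero n] (a u : ZMod n) (hu : u = 1 ∨ u = -1) {K : ℕ} (hK : K ≤ n) :
    ((fun j : ℕ => a + (j : ZMod n) * u) '' Set.Iio K).ncard = K := by
  rw [Set.ncard_image_of_injOn, ← Finset.coe_Iio, Set.ncard_coe_finset, Nat.card_Iio]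
  intro t₁ h₁ t₂ h₂ h
  simp only [Set.mem_Iio] at h₁ h₂
  simp only [add_right_inj] at h
  have hu2 : u * u = 1 := by rcases hu with h | h <;> simp [h]
  have h' := congrArg (· * u) h
  simp only [mul_assoc, hu2, mul_one] at h'
  exact castInj (lt_of_lt_of_le h₁ hK) (lt_of_lt_of_le h₂ hK) h'


lemma hasFull_to_regular {n : ℕ} (hn : 3 ≤ n) (α : ZMod n → ZMod n)
    (h : HasFullSublist n α) : ∃ β : ZMod n → ZMod n, IsWeakEndCycle n β ∧ α = α ∘ β ∘ α := by
  haveI : NeZero n := ⟨by omega⟩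
  obtain ⟨i, u, hu, hfull⟩ := h
  set k := (Set.range α).ncard with hk
  have hu2 : u * u = 1 := by rcases hu with rfl | rfl <;> ring
  refine ⟨fun x => i + u * (x - α i), ?_, ?_⟩
  · intro j
    have he : (fun x => i + u * (x - α i)) (j + 1) - (fun x => i + u * (x - α i)) j = u := by
      simp only; ring
    rw [he]
    rcases hu with rfl | rfl
    · right; left; rfl
    · right; right; rfl
  · have hS : Set.range α = (fun t : ℕ => α i + (t : ZMod n) * u) '' Set.Iio k := by
      apply (Set.eq_of_subset_of_ncard_le ?_ ?_ (Set.finite_range α)).symm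
      · rintro y ⟨t, ht, rfl⟩
        exact ⟨i + t, hfull t ht⟩
      · rw [ncard_arc _ _ hu (le_trans (le_refl k) (myRankLe α))]
    funext x
    obtain ⟨t, ht, hy⟩ : α x ∈ (fun t : ℕ => α i + (t : ZMod n) * u) '' Set.Iio k := by
      rw [← hS]; exact Set.mem_range_self x
    simp only [Set.mem_Iio] at ht
    show α x = α (i + u * (α x - α i))
    rw [← hy]
    have harg : i + u * (α i + (t : ZMod n) * u - α i) = i + (t : ZMod n) := by
      linear_combination (t : ZMod n) * hu2
    rw [harg, hfull t ht]


lemma ncard_arc1 {n : ℕ} [NeZero n] (a : ZMod n) {K : ℕ} (hK : K ≤ n) :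
    ((fun j : ℕ => a + (j : ZMod n)) '' Set.Iio K).ncard = K := by
  have he : (fun j : ℕ => a + (j : ZMod n)) = (fun j : ℕ => a + (j : ZMod n) * 1) := by
    funext j; ring
  rw [he, ncard_arc a 1 (Or.inl rfl) hK]

lemma range_arc {n : ℕ} (hn : 3 ≤ n) (α : ZMod n → ZMod n) (hα : IsWeakEndCycle n α) :
    ∃ a : ZMod n, Set.range α
      = (fun j : ℕ => a + (j : ZMod n)) '' Set.Iio (Set.range α).ncard := by
  haveI : NeZero n := ⟨by omega⟩
  by_cases hfull : ∀ c, c ∈ Set.range α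
  · have hr : Set.range α = Set.univ := Set.eq_univ_of_forall hfull
    have hk : (Set.range α).ncard = n := by
      rw [hr, Set.ncard_univ, Nat.card_eq_fintype_card, ZMod.card]
    refine ⟨0, ?_⟩
    rw [hk, hr]
    ext x
    simp only [Set.mem_univ, true_iff, Set.mem_image, Set.mem_Iio]
    exact ⟨x.val, ZMod.val_lt x, by simp [ZMod.natCast_val, ZMod.cast_id]⟩
  · push_neg at hfull
    obtain ⟨c, hc⟩ := hfull
    set g : ℕ → ℕ := fun m => (α (m : ZMod n) - c).val with hg
    have hgpos : ∀ m, 1 ≤ g m := by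
      intro m
      rw [Nat.one_le_iff_ne_zero]
      simp only [hg, ne_eq, ZMod.val_eq_zero, sub_eq_zero]
      intro h; exact hc ⟨m, h⟩
    have hglt : ∀ m, g m < n := fun m => ZMod.val_lt _
    have hval : ∀ m : ℕ, α (m : ZMod n) = c + (g m : ZMod n) := by
      intro m
      simp only [hg, ZMod.natCast_val, ZMod.cast_id]
      ring
    have hstep : ∀ m, g (m+1) = g m + 1 ∨ g (m+1) = g m ∨ g (m+1) + 1 = g m := by
      intro m
      have hd := hα (m : ZMod n)
      have hcast : ((m+1 : ℕ) : ZMod n) = (m : ZMod n) + 1 := by push_cast; ring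
      simp only [Set.mem_insert_iff, Set.mem_singleton_iff, sub_eq_iff_eq_add] at hd
      rcases hd with h | h | h
      · rw [zero_add] at h
        right; left
        show (α ((m+1:ℕ) : ZMod n) - c).val = (α (m : ZMod n) - c).val
        rw [hcast, h]
      · have hx : α ((m+1 : ℕ) : ZMod n) - c = ((g m + 1 : ℕ) : ZMod n) := by
          rw [hcast, h, hval m]; push_cast; ring
        have hne : g m + 1 ≠ n := by
          intro hEq
          have h0 : α ((m+1 : ℕ) : ZMod n) - c = 0 := by
            rw [hx, hEq, ZMod.natCast_self]
          exact hc ⟨_, by rwa [sub_eq_zero] at h0⟩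
        have hlt : g m + 1 < n := lt_of_le_of_ne (hglt m) hne
        left
        have h2 : g (m+1) = ((g m + 1 : ℕ) : ZMod n).val := congrArg ZMod.val hx
        rw [h2, ZMod.val_cast_of_lt hlt]
      · have hx : α ((m+1 : ℕ) : ZMod n) - c = ((g m - 1 : ℕ) : ZMod n) := by
          rw [hcast, h, hval m, Nat.cast_sub (hgpos m)]; push_cast; ring
        right; right
        have h2 : g (m+1) = ((g m - 1 : ℕ) : ZMod n).val := congrArg ZMod.val hx
        rw [h2, ZMod.val_cast_of_lt (by have := hglt m; omega : g m - 1 < n)]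
        have := hgpos m; omega
    have habs : ∀ m, |((g (m+1) : ℤ)) - (g m : ℤ)| ≤ 1 := by
      intro m; rw [abs_le]; rcases hstep m with h | h | h <;> omega
    have hmod : ∀ m, g m = g (m % n) := by
      intro m
      simp only [hg]
      congr 2
      conv_lhs => rw [← Nat.mod_add_div m n]
      push_cast
      simp [ZMod.natCast_self]
    set F := (Finset.range n).image g with hF
    have hFne : F.Nonempty := ⟨g 0, Finset.mem_image.mpr ⟨0, Finset.mem_range.mpr (by omega), rfl⟩⟩
    set μ := F.min' hFne with hμ
    set M := F.max' hFne with hM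
    obtain ⟨p, hp, hgp⟩ := Finset.mem_image.mp (F.min'_mem hFne)
    obtain ⟨q, hq, hgq⟩ := Finset.mem_image.mp (F.max'_mem hFne)
    rw [← hμ] at hgp
    rw [← hM] at hgq
    have hmem : ∀ m, g m ∈ F := by
      intro m
      rw [hmod m]
      exact Finset.mem_image.mpr ⟨m % n, Finset.mem_range.mpr (Nat.mod_lt _ (by omega)), rfl⟩
    have hlb : ∀ m, μ ≤ g m := fun m => F.min'_le _ (hmem m)
    have hub : ∀ m, g m ≤ M := fun m => F.le_max' _ (hmem m)
    have hattain : ∀ w, μ ≤ w → w ≤ M → ∃ m, g m = w := by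
      intro w h1 h2
      rcases le_total p q with hpq | hqp
      · obtain ⟨m, hm⟩ := ivtZ (fun m => (g m : ℤ)) habs p q (w : ℤ)
          hpq (by show (g p : ℤ) ≤ (w : ℤ); rw [hgp]; exact_mod_cast h1)
          (by show (w : ℤ) ≤ (g q : ℤ); rw [hgq]; exact_mod_cast h2)
        exact ⟨m, by exact_mod_cast hm⟩
      · obtain ⟨m, hm⟩ := ivtZ (fun m => -(g m : ℤ))
          (by intro m; rw [show -(g (m+1) : ℤ) - -(g m : ℤ) = -((g (m+1) : ℤ) - g m) by ring,
              abs_neg]; exact habs m)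
          q p (-(w : ℤ)) hqp
          (by show -(g q : ℤ) ≤ -(w : ℤ); rw [neg_le_neg_iff, hgq]; exact_mod_cast h2)
          (by show -(w : ℤ) ≤ -(g p : ℤ); rw [neg_le_neg_iff, hgp]; exact_mod_cast h1)
        refine ⟨m, ?_⟩
        have hmm : (g m : ℤ) = w := by omega
        exact_mod_cast hmm
    set K := M - μ + 1 with hK
    have hμM : μ ≤ M := by rw [← hgp]; exact hub p
    have hKle : K ≤ n := by
      have h1 := hgpos p; have h2 := hglt q
      rw [hgp] at h1; rw [hgq] at h2; omega
    refine ⟨c + (μ : ZMod n), ?_⟩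
    have hrange : Set.range α = (fun j : ℕ => (c + (μ : ZMod n)) + (j : ZMod n)) '' Set.Iio K := by
      ext y
      constructor
      · rintro ⟨x, rfl⟩
        have hx : ((x.val : ℕ) : ZMod n) = x := by simp [ZMod.natCast_val, ZMod.cast_id]
        refine ⟨g x.val - μ, ?_, ?_⟩
        · simp only [Set.mem_Iio, hK]
          have := hub x.val; omega
        · have h1 : α x = c + (g x.val : ZMod n) := by
            have h2 := hval x.val
            rwa [hx] at h2
          simp only
          rw [h1, Nat.cast_sub (hlb x.val)]
          ring
      · rintro ⟨j, hj, rfl⟩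
        simp only [Set.mem_Iio, hK] at hj
        obtain ⟨m, hm⟩ := hattain (μ + j) (by omega) (by omega)
        refine ⟨(m : ZMod n), ?_⟩
        rw [hval m, hm]
        push_cast
        ring
    have hknc : (Set.range α).ncard = K := by
      rw [hrange, ncard_arc1 _ hKle]
    rw [hknc]
    exact hrange
lemma regular_to_hasFull {n : ℕ} (hn : 3 ≤ n) (α β : ZMod n → ZMod n)
    (hα : IsWeakEndCycle n α) (hβ : IsWeakEndCycle n β) (heq : α = α ∘ β ∘ α) :
    HasFullSublist n α := by
  haveI : NeZero n := ⟨by omega⟩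
  set k := (Set.range α).ncard with hkdef
  obtain ⟨a, ha⟩ := range_arc hn α hα
  have hk_le : k ≤ n := myRankLe α
  have hfix : ∀ y ∈ Set.range α, α (β y) = y := by
    rintro y ⟨x, rfl⟩
    exact (congrFun heq x).symm
  set b : ℕ → ZMod n := fun j => β (a + (j : ZMod n)) with hb
  have hab : ∀ j < k, α (b j) = a + (j : ZMod n) := by
    intro j hj
    exact hfix _ (by rw [ha]; exact ⟨j, hj, rfl⟩)
  by_cases hk2 : k < 2
  · refine ⟨0, 1, Or.inl rfl, ?_⟩
    intro t ht
    have : t = 0 := by omega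
    subst this
    simp
  · push_neg at hk2
    have hdist : ∀ j₁ < k, ∀ j₂ < k, b j₁ = b j₂ → j₁ = j₂ := by
      intro j₁ h₁ j₂ h₂ h
      have he : a + (j₁ : ZMod n) = a + (j₂ : ZMod n) := by
        rw [← hab j₁ h₁, ← hab j₂ h₂, h]
      exact castInj (lt_of_lt_of_le h₁ hk_le) (lt_of_lt_of_le h₂ hk_le)
        (by rwa [add_right_inj] at he)
    have hstepb : ∀ j, j + 1 < k → b (j+1) - b j = 1 ∨ b (j+1) - b j = -1 := by
      intro j hj
      have hm := hβ (a + (j : ZMod n))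
      have hcast : a + ((j+1 : ℕ) : ZMod n) = (a + (j : ZMod n)) + 1 := by push_cast; ring
      have hb1 : b (j+1) = β ((a + (j : ZMod n)) + 1) := by rw [hb]; simp only; rw [hcast]
      simp only [Set.mem_insert_iff, Set.mem_singleton_iff] at hm
      rcases hm with h0 | h1 | h2
      · exfalso
        have : b (j+1) = b j := by rw [hb1]; rw [sub_eq_zero] at h0; exact h0
        have := hdist (j+1) hj j (by omega) this
        omega
      · left; rw [hb1]; exact h1
      · right; rw [hb1]; exact h2
    set v := b 1 - b 0 with hv
    have hv1 : v = 1 ∨ v = -1 := hstepb 0 (by omega)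
    have h2ne : (1 : ZMod n) ≠ -1 := by
      intro h
      have hc : ((2 : ℕ) : ZMod n) = ((0 : ℕ) : ZMod n) := by push_cast; linear_combination h
      have := castInj (by omega : 2 < n) (by omega : 0 < n) hc
      omega
    have hsame : ∀ j, j + 1 < k → b (j+1) - b j = v := by
      intro j
      induction j with
      | zero => intro _; rfl
      | succ j ih =>
        intro hj
        have hprev := ih (by omega)
        rcases hstepb (j+1) hj with h | h <;> rcases hv1 with hv' | hv'
        · rw [h, hv']
        · exfalso
          rw [hv'] at hprev
          have hbb : b (j+1+1) = b j := by linear_combination h + hprev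
          have := hdist (j+1+1) hj j (by omega) hbb
          omega
        · exfalso
          rw [hv'] at hprev
          have hbb : b (j+1+1) = b j := by linear_combination h + hprev
          have := hdist (j+1+1) hj j (by omega) hbb
          omega
        · rw [h, hv']
    have hbj : ∀ j < k, b j = b 0 + (j : ZMod n) * v := by
      intro j
      induction j with
      | zero => intro _; simp
      | succ j ih =>
        intro hj
        have e := hsame j hj
        have e2 := ih (by omega)
        push_cast
        linear_combination e + e2
    have key : ∀ j < k, α (b 0 + (j : ZMod n) * v) = a + (j : ZMod n) := by
      intro j hj
      rw [← hbj j hj]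
      exact hab j hj
    rcases hv1 with hv' | hv'
    · refine ⟨b 0, 1, Or.inl rfl, ?_⟩
      intro t ht
      have h1 : b 0 + (t : ZMod n) = b 0 + (t : ZMod n) * v := by rw [hv']; ring
      rw [h1, key t ht]
      have ha0 : α (b 0) = a := by
        have := key 0 (by omega); simpa using this
      rw [ha0]; ring
    · refine ⟨b 0 + ((k-1 : ℕ) : ZMod n) * v, -1, Or.inr rfl, ?_⟩
      intro t ht
      have h1 : (b 0 + ((k-1 : ℕ) : ZMod n) * v) + (t : ZMod n)
          = b 0 + ((k-1-t : ℕ) : ZMod n) * v := by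
        rw [hv', Nat.cast_sub (by omega : t ≤ k-1)]; ring
      rw [h1, key (k-1-t) (by omega), key (k-1) (by omega),
        Nat.cast_sub (by omega : t ≤ k-1)]
      ring

/-- A weak endomorphism `α` of `C_n` is a regular element of the monoid `wEnd(C_n)`
(i.e. `α = α β α` for some weak endomorphism `β`) iff it has a full sublist of
consecutive images. -/
theorem wEnd_regular_iff (n : ℕ) (hn : 3 ≤ n) (α : ZMod n → ZMod n)
    (hα : IsWeakEndCycle n α) :
    (∃ β : ZMod n → ZMod n, IsWeakEndCycle n β ∧ α = α ∘ β ∘ α) ↔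
      HasFullSublist n α := by
  constructor
  · rintro ⟨β, hβ, heq⟩
    exact regular_to_hasFull hn α β hα hβ heq
  · exact hasFull_to_regular hn α
end

section
/- Let α be an endomorphism of the cycle graph C_n. Then α is regular in the monoid End(C_n) if and only if α is regular in the monoid wEnd(C_n). -/
/-- An endomorphism `α` of `C_n` is regular in the monoid `End(C_n)` iff it is regular
in the monoid `wEnd(C_n)`. -/
theorem end_regular_iff_wEnd_regular (n : ℕ) (hn : 3 ≤ n) (α : ZMod n → ZMod n)
    (hα : IsEndCycle n α) :
    (∃ β : ZMod n → ZMod n, IsEndCycle n β ∧ α = α ∘ β ∘ α) ↔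
      (∃ β : ZMod n → ZMod n, IsWeakEndCycle n β ∧ α = α ∘ β ∘ α) := by
  haveI : NeZero n := ⟨by omega⟩
  haveI : Fact (1 < n) := ⟨by omega⟩
  constructor
  · rintro ⟨β, hβ, hr⟩
    refine ⟨β, fun i => ?_, hr⟩
    have := hβ i
    simp only [Set.mem_insert_iff, Set.mem_singleton_iff] at this ⊢
    tauto
  · rintro ⟨β, hβ, hr⟩
    have h1 : (1 : ZMod n) ≠ 0 := one_ne_zero
    have h2 : (2 : ZMod n) ≠ 0 := by
      intro h
      have hd : n ∣ 2 := by
        have := (ZMod.natCast_eq_zero_iff 2 n).mp (by push_cast; exact h)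
        exact this
      have := Nat.le_of_dvd (by norm_num) hd
      omega
    have hαγ : ∀ j : ZMod n, α (β (α j)) = α j := by
      intro j
      have := congrFun hr j
      simp only [Function.comp_apply] at this
      exact this.symm
    -- the steps of β along the image of α are nonzero
    have hg : ∀ i : ZMod n,
        β (α (i + 1)) - β (α i) ∈ ({1, -1} : Set (ZMod n)) := by
      intro i
      have ha := hα i
      simp only [Set.mem_insert_iff, Set.mem_singleton_iff] at ha ⊢
      have hne : β (α (i + 1)) ≠ β (α i) := by
        intro h
        have := congrArg α h
        rw [hαγ (i + 1), hαγ i] at this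
        rcases ha with h'|h'
        · exact h1 (by linear_combination this - h')
        · exact h1 (by linear_combination h' - this)
      rcases ha with h'|h'
      · have he : α (i + 1) = α i + 1 := by linear_combination h'
        have hb := hβ (α i)
        rw [← he] at hb
        simp only [Set.mem_insert_iff, Set.mem_singleton_iff] at hb
        rcases hb with hb|hb|hb
        · exact absurd (by linear_combination hb) hne
        · exact Or.inl hb
        · exact Or.inr hb
      · have he : α i = α (i + 1) + 1 := by linear_combination -h'
        have hb := hβ (α (i + 1))
        rw [← he] at hb
        simp only [Set.mem_insert_iff, Set.mem_singleton_iff] at hb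
        rcases hb with hb|hb|hb
        · exact absurd (by linear_combination -hb) hne
        · exact Or.inr (by linear_combination -hb)
        · exact Or.inl (by linear_combination -hb)
    -- the slope at the base point
    obtain ⟨ε, hε1, hbase⟩ : ∃ ε : ZMod n, (ε = 1 ∨ ε = -1) ∧
        β (α (0 + 1)) - β (α 0) = ε * (α (0 + 1) - α 0) := by
      have hg0 := hg 0
      have ha0 := hα 0
      simp only [Set.mem_insert_iff, Set.mem_singleton_iff] at hg0 ha0
      rcases hg0 with e|e <;> rcases ha0 with f|f
      · exact ⟨1, Or.inl rfl, by rw [e, f]; ring⟩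
      · exact ⟨-1, Or.inr rfl, by rw [e, f]; ring⟩
      · exact ⟨-1, Or.inr rfl, by rw [e, f]; ring⟩
      · exact ⟨1, Or.inl rfl, by rw [e, f]; ring⟩
    -- the slope propagates
    have hstep : ∀ i : ZMod n,
        β (α (i + 1)) - β (α i) = ε * (α (i + 1) - α i) →
        β (α (i + 1 + 1)) - β (α (i + 1)) = ε * (α (i + 1 + 1) - α (i + 1)) := by
      intro i IH
      have hA : α (i + 1 + 1) = α i → β (α (i + 1 + 1)) = β (α i) :=
        fun h => congrArg β h
      have hB : β (α (i + 1 + 1)) = β (α i) → α (i + 1 + 1) = α i := by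
        intro h
        have := congrArg α h
        rwa [hαγ (i + 1 + 1), hαγ i] at this
      have a1 := hα i
      have a2 := hα (i + 1)
      have g1 := hg i
      have g2 := hg (i + 1)
      simp only [Set.mem_insert_iff, Set.mem_singleton_iff] at a1 a2 g1 g2
      rcases a1 with a1|a1 <;> rcases a2 with a2|a2 <;>
        rcases g1 with g1|g1 <;> rcases g2 with g2|g2 <;>
        first
        | linear_combination g2 - ε * a2 + IH - g1 + ε * a1
        | linear_combination g2 - ε * a2 - IH + g1 - ε * a1
        | exact absurd (hB (by linear_combination g1 + g2))
            (fun hc => h2 (by linear_combination hc - a1 - a2))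
        | exact absurd (hB (by linear_combination g1 + g2))
            (fun hc => h2 (by linear_combination a1 + a2 - hc))
        | exact absurd (hA (by linear_combination a1 + a2))
            (fun hc => h2 (by linear_combination hc - g1 - g2))
        | exact absurd (hA (by linear_combination a1 + a2))
            (fun hc => h2 (by linear_combination g1 + g2 - hc))
    have hP : ∀ k : ℕ,
        β (α ((k : ZMod n) + 1)) - β (α (k : ZMod n))
          = ε * (α ((k : ZMod n) + 1) - α (k : ZMod n)) := by
      intro k
      induction k with
      | zero => push_cast; exact hbase
      | succ m ih =>
        have := hstep (m : ZMod n) ih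
        push_cast
        exact this
    have hQ : ∀ k : ℕ,
        β (α (k : ZMod n)) = β (α 0) + ε * (α (k : ZMod n) - α 0) := by
      intro k
      induction k with
      | zero => push_cast; ring
      | succ m ih =>
        have := hP m
        push_cast
        push_cast at ih this
        linear_combination ih + this
    refine ⟨fun x => β (α 0) + ε * (x - α 0), ?_, ?_⟩
    · intro i
      show (β (α 0) + ε * (i + 1 - α 0)) - (β (α 0) + ε * (i - α 0)) ∈ _
      have h : (β (α 0) + ε * (i + 1 - α 0)) - (β (α 0) + ε * (i - α 0)) = ε := by
        ring
      rw [h]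
      rcases hε1 with h'|h' <;> simp [h']
    · funext i
      simp only [Function.comp_apply]
      have hi : ((i.val : ℕ) : ZMod n) = i := by
        rw [ZMod.natCast_val, ZMod.cast_id]
      have := hQ i.val
      rw [hi] at this
      rw [← this]
      exact (hαγ i).symm
end

section
/- Let α be a weak endomorphism of the cycle graph C_n, and suppose j and j+1 both lie in the image of α (j mod n). Then there exists i with α(i) = j and such that α(i-1) = j+1 or α(i+1) = j+1. -/
/-- If `j` and `j + 1` both lie in the image of a weak endomorphism `α` of `C_n`, then
there is `i` with `α i = j` and `α (i - 1) = j + 1` or `α (i + 1) = j + 1`. -/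
theorem consecutive_images (n : ℕ) (hn : 3 ≤ n) (α : ZMod n → ZMod n)
    (hα : IsWeakEndCycle n α) (j : ZMod n)
    (hj : j ∈ Set.range α) (hj1 : j + 1 ∈ Set.range α) :
    ∃ i : ZMod n, α i = j ∧ (α (i - 1) = j + 1 ∨ α (i + 1) = j + 1) := by
  obtain ⟨m, rfl⟩ : ∃ m, n = m + 1 := ⟨n - 1, by omega⟩
  by_contra hcon
  push_neg at hcon
  haveI : NeZero (m + 1) := ⟨by omega⟩
  haveI : Fact (1 < m + 1) := ⟨by omega⟩
  obtain ⟨a, ha⟩ := hj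
  obtain ⟨b, hb⟩ := hj1
  -- forbidden transitions
  have hf1 : ∀ i : ZMod (m + 1), α i = j → α (i + 1) ≠ j + 1 := fun i hi => (hcon i hi).2
  have hf2 : ∀ i : ZMod (m + 1), α i = j + 1 → α (i + 1) ≠ j := by
    intro i hi hj'
    exact (hcon (i + 1) hj').1 (by simpa using hi)
  have hvneg : (-1 : ZMod (m + 1)).val = m := ZMod.val_neg_one m
  -- val of z + 1 when z ≠ -1
  have hval_add : ∀ z : ZMod (m + 1), z ≠ -1 → (z + 1).val = z.val + 1 := by
    intro z hz
    have hlt : z.val < m + 1 := ZMod.val_lt z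
    have hne : z.val ≠ m := by
      intro h
      apply hz
      have h1 : ((z.val : ℕ) : ZMod (m + 1)) = z := by
        simp [ZMod.natCast_val, ZMod.cast_id]
      have h2 : ((m : ℕ) : ZMod (m + 1)) + 1 = 0 := by
        rw [show ((m : ℕ) : ZMod (m + 1)) + 1 = (((m + 1 : ℕ)) : ZMod (m + 1)) by push_cast; ring]
        exact ZMod.natCast_self (m + 1)
      rw [← h1, h]
      linear_combination h2
    have := ZMod.val_add z 1
    rw [ZMod.val_one] at this
    rw [this, Nat.mod_eq_of_lt (by omega)]
  have hval_sub : ∀ z : ZMod (m + 1), z ≠ 0 → z.val = (z - 1).val + 1 := by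
    intro z hz
    have h1 : z - 1 ≠ -1 := by
      intro h; apply hz; linear_combination h
    have := hval_add (z - 1) h1
    rw [sub_add_cancel] at this
    exact this
  -- the distance function
  set D : ℕ → ℕ := fun t => (α (a + (t : ZMod (m + 1))) - (j + 1)).val with hD
  have hstep : ∀ t : ℕ, D (t + 1) ≤ D t + 1 ∧ D t ≤ D (t + 1) + 1 := by
    intro t
    set i : ZMod (m + 1) := a + (t : ZMod (m + 1)) with hi
    have hcast : a + ((t + 1 : ℕ) : ZMod (m + 1)) = i + 1 := by rw [hi]; push_cast; ring
    have hDt : D t = (α i - (j + 1)).val := rfl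
    have hDt1 : D (t + 1) = (α (i + 1) - (j + 1)).val := by
      simp only [hD]
      rw [hcast]
    have hmem := hα i
    simp only [Set.mem_insert_iff, Set.mem_singleton_iff] at hmem
    rcases hmem with h | h | h
    · have : α (i + 1) = α i := by linear_combination h
      rw [hDt1, hDt, this]
      omega
    · -- step +1
      have hup : α (i + 1) = α i + 1 := by linear_combination h
      have hne : α i ≠ j := by
        intro hij
        exact hf1 i hij (by rw [hup, hij])
      have hz : α i - (j + 1) ≠ -1 := by
        intro h'; apply hne; linear_combination h'
      have := hval_add (α i - (j + 1)) hz
      have heq : α (i + 1) - (j + 1) = (α i - (j + 1)) + 1 := by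
        rw [hup]; ring
      rw [hDt1, hDt, heq, this]
      omega
    · -- step -1
      have hdown : α (i + 1) = α i - 1 := by linear_combination h
      have hne : α i ≠ j + 1 := by
        intro hij
        exact hf2 i hij (by rw [hdown, hij]; ring)
      have hz : α i - (j + 1) ≠ 0 := by
        intro h'; apply hne; linear_combination h'
      have := hval_sub (α i - (j + 1)) hz
      have heq : α (i + 1) - (j + 1) = (α i - (j + 1)) - 1 := by
        rw [hdown]; ring
      rw [hDt1, hDt, heq]
      omega
  have hlip : ∀ s t : ℕ, D t ≤ D (t + s) + s ∧ D (t + s) ≤ D t + s := by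
    intro s
    induction s with
    | zero => intro t; simp
    | succ s ih =>
      intro t
      have h1 := ih t
      have h2 := hstep (t + s)
      have : t + (s + 1) = (t + s) + 1 := by ring
      rw [this]
      omega
  have hD0 : D 0 = m := by
    simp only [hD, Nat.cast_zero, add_zero, ha]
    have : j - (j + 1) = -1 := by ring
    rw [this, hvneg]
  set k : ℕ := (b - a).val with hk
  have hks : a + (k : ZMod (m + 1)) = b := by
    simp [hk, ZMod.natCast_val, ZMod.cast_id]
  have hDk : D k = 0 := by
    simp only [hD, hks, hb]
    simp
  have hkn : k < m + 1 := ZMod.val_lt _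
  have hDn : D (m + 1) = m := by
    have : a + (((m + 1 : ℕ)) : ZMod (m + 1)) = a := by
      rw [ZMod.natCast_self]; ring
    simp only [hD, this, ha]
    have : j - (j + 1) = -1 := by ring
    rw [this, hvneg]
  have h1 := (hlip k 0).1
  simp only [zero_add] at h1
  rw [hD0, hDk] at h1
  have h2 := (hlip (m + 1 - k) k).2
  rw [show k + (m + 1 - k) = m + 1 by omega, hDn, hDk] at h2
  omega
end

section
/- Let α, β be weak endomorphisms (respectively endomorphisms) of the cycle graph C_n. Then α and β are Green's R-related in the monoid wEnd(C_n) (respectively End(C_n)) if and only if ker(α) = ker(β). -/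
lemma twoNeZero (n : ℕ) (hn : 3 ≤ n) : (2 : ZMod n) ≠ 0 := by
  haveI : NeZero n := ⟨by omega⟩
  have : ((2:ℕ) : ZMod n) ≠ 0 := by
    rw [Ne, ZMod.natCast_eq_zero_iff]
    exact fun h => by have := Nat.le_of_dvd (by norm_num) h; omega
  simpa using this

/-- Key structural lemma: weak endomorphisms of `C_n` with equal kernels differ
by a rotation or a reflection. -/
lemma key (n : ℕ) (hn : 3 ≤ n) (α β : ZMod n → ZMod n)
    (hα : IsWeakEndCycle n α) (hβ : IsWeakEndCycle n β)
    (hker : ∀ x y : ZMod n, α x = α y ↔ β x = β y) :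
    (∃ c, ∀ x, α x = c + β x) ∨ (∃ c, ∀ x, α x = c - β x) := by
  haveI : NeZero n := ⟨by omega⟩
  have h2 : (2 : ZMod n) ≠ 0 := twoNeZero n hn
  set e : ZMod n → ZMod n := fun i => α (i + 1) - α i with hE
  set d : ZMod n → ZMod n := fun i => β (i + 1) - β i with hD
  have heq : ∀ i, α (i + 1) = α i + e i := fun i => by simp [hE]
  have hdq : ∀ i, β (i + 1) = β i + d i := fun i => by simp [hD]
  have he3 : ∀ i, e i = 0 ∨ e i = 1 ∨ e i = -1 := fun i => by
    simpa [hE, Set.mem_insert_iff] using hα i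
  have hd3 : ∀ i, d i = 0 ∨ d i = 1 ∨ d i = -1 := fun i => by
    simpa [hD, Set.mem_insert_iff] using hβ i
  have hzero : ∀ i, d i = 0 ↔ e i = 0 := by
    intro i
    simp only [hE, hD, sub_eq_zero]
    exact (hker _ _).symm
  have hsgn : ∀ i, d i ≠ 0 → (e i = d i ∨ e i = -d i) := by
    intro i hi
    have hei : e i ≠ 0 := fun h => hi ((hzero i).2 h)
    rcases he3 i with h | h | h
    · exact absurd h hei
    · rcases hd3 i with h' | h' | h'
      · exact absurd h' hi
      · exact Or.inl (by rw [h, h'])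
      · exact Or.inr (by rw [h, h', neg_neg])
    · rcases hd3 i with h' | h' | h'
      · exact absurd h' hi
      · exact Or.inr (by rw [h, h'])
      · exact Or.inl (by rw [h, h'])
  have hdd : ∀ i, d i ≠ 0 → d i + d i ≠ 0 := by
    intro i hi h
    rcases hd3 i with h' | h' | h'
    · exact hi h'
    · rw [h'] at h; exact h2 (by linear_combination h)
    · rw [h'] at h; exact h2 (by linear_combination -h)
  -- constancy along zero steps
  have hconst : ∀ (f : ZMod n → ZMod n) (a : ZMod n) (m : ℕ),
      (∀ r : ℕ, 0 < r → r ≤ m → f (a + (r : ZMod n) + 1) = f (a + (r : ZMod n))) →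
      f (a + (m : ZMod n) + 1) = f (a + 1) := by
    intro f a m hm
    induction m with
    | zero => simp
    | succ k ih =>
      have h1 : f (a + ((k+1 : ℕ) : ZMod n) + 1) = f (a + ((k+1 : ℕ) : ZMod n)) :=
        hm (k+1) (by omega) le_rfl
      have h2' : (((k+1 : ℕ)) : ZMod n) = (k : ZMod n) + 1 := by push_cast; ring
      rw [h1, h2', ← add_assoc]
      exact ih (fun r h1 h2 => hm r h1 (by omega))
  -- local propagation across a block of zero steps
  have loc : ∀ (a : ZMod n) (m : ℕ), e a = d a → d a ≠ 0 →
      (∀ r : ℕ, 0 < r → r ≤ m → d (a + (r : ZMod n)) = 0) →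
      d (a + (m : ZMod n) + 1) ≠ 0 → e (a + (m : ZMod n) + 1) = d (a + (m : ZMod n) + 1) := by
    intro a m hea hda hz hd1
    have hez : ∀ r : ℕ, 0 < r → r ≤ m → e (a + (r : ZMod n)) = 0 :=
      fun r h1' h2' => (hzero _).1 (hz r h1' h2')
    have hβc : β (a + (m : ZMod n) + 1) = β (a + 1) :=
      hconst β a m (fun r h1' h2' => by
        rw [hdq (a + (r : ZMod n)), hz r h1' h2', add_zero])
    have hαc : α (a + (m : ZMod n) + 1) = α (a + 1) :=
      hconst α a m (fun r h1' h2' => by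
        rw [heq (a + (r : ZMod n)), hez r h1' h2', add_zero])
    set b := a + (m : ZMod n) + 1 with hb
    by_contra hne
    have he1 : e b = -(d b) := (hsgn b hd1).resolve_left hne
    have hda' : d b = d a ∨ d b = -(d a) := by
      rcases hd3 b with h | h | h
      · exact absurd h hd1
      · rcases hd3 a with h' | h' | h'
        · exact absurd h' hda
        · exact Or.inl (by rw [h, h'])
        · exact Or.inr (by rw [h, h', neg_neg])
      · rcases hd3 a with h' | h' | h'
        · exact absurd h' hda
        · exact Or.inr (by rw [h, h'])
        · exact Or.inl (by rw [h, h'])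
    have hbB : β (b + 1) = β a + d a + d b := by
      rw [hdq b, hβc, hdq a]
    have hbA : α (b + 1) = α a + d a + e b := by
      rw [heq b, hαc, heq a, hea]
    rcases hda' with h | h
    · have hAeq : α (b + 1) = α a := by rw [hbA, he1, h]; ring
      have hBeq : β (b + 1) = β a := (hker _ _).1 hAeq
      rw [hbB, h] at hBeq
      exact hdd a hda (by linear_combination hBeq)
    · have hBeq : β (b + 1) = β a := by rw [hbB, h]; ring
      have hAeq : α (b + 1) = α a := (hker _ _).2 hBeq
      rw [hbA, he1, h] at hAeq
      exact hdd a hda (by linear_combination hAeq)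
  -- global propagation
  have prop : ∀ s : ℕ, ∀ a : ZMod n, e a = d a → d a ≠ 0 →
      d (a + (s : ZMod n)) ≠ 0 → e (a + (s : ZMod n)) = d (a + (s : ZMod n)) := by
    intro s
    induction s using Nat.strong_induction_on with
    | _ s ih =>
      intro a hea hda hds
      rcases Nat.eq_zero_or_pos s with rfl | hs
      · simpa using hea
      classical
      set P : ℕ → Prop := fun k => d (a + (k : ZMod n)) ≠ 0 with hP
      have hP0 : P 0 := by simpa [hP] using hda
      set s' := Nat.findGreatest P (s - 1) with hs'
      have hPs' : P s' := Nat.findGreatest_spec (Nat.zero_le _) hP0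
      have hs'le : s' ≤ s - 1 := Nat.findGreatest_le _
      have hgz : ∀ r : ℕ, s' < r → r ≤ s - 1 → d (a + (r : ZMod n)) = 0 := by
        intro r h1' h2'
        by_contra hc
        exact (Nat.findGreatest_is_greatest h1' h2') hc
      have hes' : e (a + (s' : ZMod n)) = d (a + (s' : ZMod n)) :=
        ih s' (by omega) a hea hda hPs'
      have hkey := loc (a + (s' : ZMod n)) (s - 1 - s') hes' hPs'
        (fun r h1' h2' => by
          have : a + (s' : ZMod n) + (r : ZMod n) = a + ((s' + r : ℕ) : ZMod n) := by
            push_cast; ring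
          rw [this]
          exact hgz (s' + r) (by omega) (by omega))
      have harith : a + (s' : ZMod n) + ((s - 1 - s' : ℕ) : ZMod n) + 1 = a + (s : ZMod n) := by
        have : (s' : ZMod n) + ((s - 1 - s' : ℕ) : ZMod n) + 1 = (s : ZMod n) := by
          have : s' + (s - 1 - s') + 1 = s := by omega
          calc (s' : ZMod n) + ((s - 1 - s' : ℕ) : ZMod n) + 1
              = ((s' + (s - 1 - s') + 1 : ℕ) : ZMod n) := by push_cast; ring
            _ = (s : ZMod n) := by rw [this]
        rw [add_assoc, add_assoc, ← this]; ring
      rw [harith] at hkey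
      exact hkey hds
  -- dichotomy
  have main : (∀ i, e i = d i) ∨ (∀ i, e i = -d i) := by
    by_cases hPall : ∀ i, e i = d i
    · exact Or.inl hPall
    push_neg at hPall
    obtain ⟨i0, hi0⟩ := hPall
    have hd0 : d i0 ≠ 0 := by
      intro h
      exact hi0 (by rw [h, (hzero i0).1 h])
    have he0 : e i0 = -d i0 := (hsgn i0 hd0).resolve_left hi0
    refine Or.inr (fun j => ?_)
    by_cases hdj : d j = 0
    · rw [(hzero j).1 hdj, hdj, neg_zero]
    rcases hsgn j hdj with hej | hej
    · exfalso
      obtain ⟨s, hs⟩ : ∃ s : ℕ, i0 = j + (s : ZMod n) :=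
        ⟨(i0 - j).val, by rw [ZMod.natCast_rightInverse (i0 - j)]; ring⟩
      rw [hs] at hd0 he0
      have := prop s j hej hdj hd0
      rw [this] at he0
      exact hdd _ hd0 (by linear_combination he0)
    · exact hej
  rcases main with hm | hm
  · refine Or.inl ⟨α 0 - β 0, fun x => ?_⟩
    have aux : ∀ m : ℕ, α ((m : ℕ) : ZMod n) - β ((m : ℕ) : ZMod n) = α 0 - β 0 := by
      intro m
      induction m with
      | zero => simp
      | succ k ih =>
        have hc : (((k+1 : ℕ)) : ZMod n) = (k : ZMod n) + 1 := by push_cast; ring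
        rw [hc, heq, hdq, hm]
        linear_combination ih
    have := aux x.val
    rw [ZMod.natCast_rightInverse x] at this
    linear_combination this
  · refine Or.inr ⟨α 0 + β 0, fun x => ?_⟩
    have aux : ∀ m : ℕ, α ((m : ℕ) : ZMod n) + β ((m : ℕ) : ZMod n) = α 0 + β 0 := by
      intro m
      induction m with
      | zero => simp
      | succ k ih =>
        have hc : (((k+1 : ℕ)) : ZMod n) = (k : ZMod n) + 1 := by push_cast; ring
        rw [hc, heq, hdq, hm]
        linear_combination ih
    have := aux x.val
    rw [ZMod.natCast_rightInverse x] at this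
    linear_combination this

lemma endToWeak {n : ℕ} {α : ZMod n → ZMod n} (h : IsEndCycle n α) : IsWeakEndCycle n α := by
  intro i
  rcases h i with h' | h'
  · exact Or.inr (Or.inl h')
  · exact Or.inr (Or.inr h')

lemma rotEnd (n : ℕ) (c : ZMod n) : IsEndCycle n (fun y => c + y) := by
  intro i
  have : c + (i + 1) - (c + i) = 1 := by ring
  rw [this]; exact Or.inl rfl

lemma reflEnd (n : ℕ) (c : ZMod n) : IsEndCycle n (fun y => c - y) := by
  intro i
  have : c - (i + 1) - (c - i) = -1 := by ring
  rw [this]; exact Or.inr rfl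

/-- Green's `R`-relation on `wEnd(C_n)` and on `End(C_n)`: `α R β` (each is a right
multiple `β γ`, i.e. `γ ∘ β`, of the other within the monoid) iff `ker α = ker β`.
Both the weak-endomorphism and the endomorphism cases are stated. -/
theorem green_R_iff_ker_eq (n : ℕ) (hn : 3 ≤ n) :
    (∀ α β : ZMod n → ZMod n, IsWeakEndCycle n α → IsWeakEndCycle n β →
      (((∃ γ, IsWeakEndCycle n γ ∧ α = γ ∘ β) ∧ (∃ δ, IsWeakEndCycle n δ ∧ β = δ ∘ α)) ↔
        ∀ x y : ZMod n, α x = α y ↔ β x = β y)) ∧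
    (∀ α β : ZMod n → ZMod n, IsEndCycle n α → IsEndCycle n β →
      (((∃ γ, IsEndCycle n γ ∧ α = γ ∘ β) ∧ (∃ δ, IsEndCycle n δ ∧ β = δ ∘ α)) ↔
        ∀ x y : ZMod n, α x = α y ↔ β x = β y)) := by
  constructor
  · intro α β hα hβ
    constructor
    · rintro ⟨⟨γ, _, hγ⟩, ⟨δ, _, hδ⟩⟩ x y
      constructor
      · intro h
        rw [hδ]; simp only [Function.comp_apply, h]
      · intro h
        rw [hγ]; simp only [Function.comp_apply, h]
    · intro hker
      rcases key n hn α β hα hβ hker with ⟨c, hc⟩ | ⟨c, hc⟩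
      · exact ⟨⟨fun y => c + y, endToWeak (rotEnd n c), funext fun x => hc x⟩,
          ⟨fun y => -c + y, endToWeak (rotEnd n (-c)), funext fun x => by
            simp only [Function.comp_apply, hc x]; ring⟩⟩
      · exact ⟨⟨fun y => c - y, endToWeak (reflEnd n c), funext fun x => hc x⟩,
          ⟨fun y => c - y, endToWeak (reflEnd n c), funext fun x => by
            simp only [Function.comp_apply, hc x]; ring⟩⟩
  · intro α β hα hβ
    constructor
    · rintro ⟨⟨γ, _, hγ⟩, ⟨δ, _, hδ⟩⟩ x y
      constructor
      · intro h
        rw [hδ]; simp only [Function.comp_apply, h]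
      · intro h
        rw [hγ]; simp only [Function.comp_apply, h]
    · intro hker
      rcases key n hn α β (endToWeak hα) (endToWeak hβ) hker with ⟨c, hc⟩ | ⟨c, hc⟩
      · exact ⟨⟨fun y => c + y, rotEnd n c, funext fun x => hc x⟩,
          ⟨fun y => -c + y, rotEnd n (-c), funext fun x => by
            simp only [Function.comp_apply, hc x]; ring⟩⟩
      · exact ⟨⟨fun y => c - y, reflEnd n c, funext fun x => hc x⟩,
          ⟨fun y => c - y, reflEnd n c, funext fun x => by
            simp only [Function.comp_apply, hc x]; ring⟩⟩
end
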